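/- arXiv:1701.03847 — 10 statements merged into one kernel-verified Lean document; each statement's English description precedes it below -/
import Mathlib

section
/- If f(z) = h(z) - conj(z) with h analytic has an isolated zero at z0 that is sense-reversing (i.e., |h'(z0)| < 1), then the Poincaré index of f at z0 equals -1. -/
open Complex Set

/-- `WindingOn f z0 r m` : the winding of `f` along the positively oriented circle of
radius `r` centered at `z0` equals `m`, expressed via a continuous branch of the argument. -/
def WindingOn (f : ℂ → ℂ) (z0 : ℂ) (r : ℝ) (m : ℤ) : Prop :=
  ∃ θ : ℝ → ℝ, ContinuousOn θ (Set.Icc 0 (2 * Real.pi)) ∧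
    (∀ t ∈ Set.Icc 0 (2 * Real.pi),
      f (z0 + r * Complex.exp (Complex.I * t)) =
        (‖f (z0 + r * Complex.exp (Complex.I * t))‖ : ℂ) *
          Complex.exp (Complex.I * (θ t : ℝ))) ∧
    θ (2 * Real.pi) - θ 0 = 2 * Real.pi * m

/-- The Poincaré index of `f` at `z0` is `m`: the winding along all sufficiently
small circles around `z0` equals `m`. -/
def HasIndex (f : ℂ → ℂ) (z0 : ℂ) (m : ℤ) : Prop :=
  ∃ r0 > 0, ∀ r : ℝ, 0 < r → r < r0 → WindingOn f z0 r m

theorem index_sense_reversing (h f : ℂ → ℂ) (z0 : ℂ)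
    (hh : AnalyticAt ℂ h z0)
    (hf : ∀ z, f z = h z - (starRingEnd ℂ) z)
    (hz : f z0 = 0)
    (hiso : ∀ᶠ z in nhdsWithin z0 {z0}ᶜ, f z ≠ 0)
    (hsr : ‖deriv h z0‖ < 1) :
    HasIndex f z0 (-1) := by
  set d := deriv h z0 with hd
  set c := ‖d‖ with hc
  have hc0 : 0 ≤ c := norm_nonneg d
  have hεpos : (0:ℝ) < (1 - c)/2 := by linarith
  have hder := hh.differentiableAt.hasDerivAt
  rw [hasDerivAt_iff_isLittleO] at hder
  have hbound := hder.def hεpos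
  have hant := hh.eventually_analyticAt
  have hev := hbound.and hant
  rw [Metric.eventually_nhds_iff] at hev
  obtain ⟨r0, hr0, hball⟩ := hev
  refine ⟨r0, hr0, ?_⟩
  intro r hrpos hrr0
  have hz0c : (starRingEnd ℂ) z0 = h z0 := by
    have h1 : h z0 - (starRingEnd ℂ) z0 = 0 := (hf z0).symm.trans hz
    exact (sub_eq_zero.mp h1).symm
  -- the circle parametrization
  set γ : ℝ → ℂ := fun t => z0 + (r : ℂ) * Complex.exp (Complex.I * t) with hγ
  have habsE : ∀ t : ℝ, ‖Complex.exp (Complex.I * t)‖ = 1 := by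
    intro t; simp [Complex.norm_exp]
  have hmem : ∀ t : ℝ, dist (γ t) z0 < r0 := by
    intro t
    have : dist (γ t) z0 = ‖(r : ℂ) * Complex.exp (Complex.I * t)‖ := by
      simp [hγ, Complex.dist_eq]
    rw [this, norm_mul, habsE t]
    simp [abs_of_pos hrpos]
    linarith
  have hγsub : ∀ t : ℝ, γ t - z0 = (r : ℂ) * Complex.exp (Complex.I * t) := by
    intro t; simp [hγ]
  have habsγ : ∀ t : ℝ, ‖γ t - z0‖ = r := by
    intro t; rw [hγsub t, norm_mul, habsE t]; simp [abs_of_pos hrpos]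
  -- bound on h along the circle
  have hhb : ∀ t : ℝ, ‖h (γ t) - h z0‖ ≤ (c + 1)/2 * r := by
    intro t
    have hb := (hball (hmem t)).1
    have hnorm : ‖γ t - z0‖ = r := habsγ t
    rw [hnorm] at hb
    have htri : ‖h (γ t) - h z0‖ ≤
        ‖h (γ t) - h z0 - (γ t - z0) • d‖ + ‖(γ t - z0) • d‖ := by
      calc ‖h (γ t) - h z0‖
          = ‖(h (γ t) - h z0 - (γ t - z0) • d) + (γ t - z0) • d‖ := by ring_nf
        _ ≤ _ := norm_add_le _ _
    have hsm : ‖(γ t - z0) • d‖ = r * c := by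
      rw [smul_eq_mul, norm_mul, habsγ t]
    have hb' : ‖h (γ t) - h z0 - (γ t - z0) • d‖ ≤ (1 - c)/2 * r := hb
    calc ‖h (γ t) - h z0‖ ≤ (1 - c)/2 * r + r * c := by
          rw [← hsm]; linarith [htri, hb']
      _ = (c + 1)/2 * r := by ring
  -- the auxiliary function q
  set q : ℝ → ℂ := fun t => (r : ℂ) - (h (γ t) - h z0) * Complex.exp (Complex.I * t) with hq
  have hqr : ∀ t : ℝ, ‖q t - r‖ ≤ (c + 1)/2 * r := by
    intro t
    have h1 : q t - r = -((h (γ t) - h z0) * Complex.exp (Complex.I * t)) := by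
      simp only [hq]; ring
    rw [h1, norm_neg, norm_mul, habsE t, mul_one]
    exact hhb t
  have hqre : ∀ t : ℝ, 0 < (q t).re := by
    intro t
    have h1 := hqr t
    have h2 : |(q t - r).re| ≤ ‖q t - r‖ := Complex.abs_re_le_norm _
    have h3 : (q t - r).re = (q t).re - r := by simp
    have h4 : (c + 1)/2 * r < r := by nlinarith
    have h5 : |(q t).re - r| ≤ (c+1)/2 * r := by rw [← h3]; linarith
    have := abs_le.mp h5
    linarith [this.1]
  have hqne : ∀ t : ℝ, q t ≠ 0 := by
    intro t hq0
    have := hqre t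
    rw [hq0] at this
    simp at this
  -- key identity
  have hfq : ∀ t : ℝ, f (γ t) = Complex.exp (Complex.I * ((Real.pi : ℂ) - (t : ℂ))) * q t := by
    intro t
    rw [hf (γ t)]
    have hconj : (starRingEnd ℂ) (γ t) = h z0 + (r : ℂ) * Complex.exp (-(Complex.I * t)) := by
      simp only [hγ, map_add, map_mul, hz0c, Complex.conj_ofReal]
      congr 2
      rw [← Complex.exp_conj]
      congr 1
      simp
    rw [hconj]
    have hexppi : Complex.exp (Complex.I * ((Real.pi : ℂ) - (t : ℂ)))
        = -Complex.exp (-(Complex.I * t)) := by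
      rw [show Complex.I * ((Real.pi : ℂ) - (t : ℂ)) = (Real.pi : ℂ) * Complex.I + -(Complex.I * t) by ring,
        Complex.exp_add, Complex.exp_pi_mul_I]
      ring
    rw [hexppi]
    have hEE : Complex.exp (-(Complex.I * t)) * Complex.exp (Complex.I * t) = 1 := by
      rw [← Complex.exp_add]; simp
    simp only [hq]
    linear_combination -(h (γ t) - h z0) * hEE
  have hfabs : ∀ t : ℝ, ‖f (γ t)‖ = ‖q t‖ := by
    intro t
    rw [hfq t, norm_mul]
    have : ‖Complex.exp (Complex.I * ((Real.pi : ℂ) - (t : ℂ)))‖ = 1 := by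
      have : Complex.I * ((Real.pi : ℂ) - (t : ℂ)) = Complex.I * ((Real.pi - t : ℝ) : ℂ) := by
        push_cast; ring
      rw [this]
      simp [Complex.norm_exp]
    rw [this, one_mul]
  -- continuity of q
  have hqcont : ∀ t : ℝ, ContinuousAt q t := by
    intro t
    have hγcont : Continuous γ := by
      apply continuous_const.add
      exact continuous_const.mul (Complex.continuous_exp.comp
        (continuous_const.mul Complex.continuous_ofReal))
    have hEcont : Continuous (fun t : ℝ => Complex.exp (Complex.I * t)) :=
      Complex.continuous_exp.comp (continuous_const.mul Complex.continuous_ofReal)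
    have hhc : ContinuousAt h (γ t) := ((hball (hmem t)).2).continuousAt
    have hcomp : ContinuousAt (fun s => h (γ s)) t := hhc.comp hγcont.continuousAt
    exact continuousAt_const.sub ((hcomp.sub continuousAt_const).mul hEcont.continuousAt)
  refine ⟨fun t => Real.pi - t + (q t).arg, ?_, ?_, ?_⟩
  · -- continuity of θ
    apply continuousOn_of_forall_continuousAt
    intro t _
    exact (continuousAt_const.sub continuousAt_id).add
      ((Complex.continuousAt_arg (Or.inl (hqre t))).comp (hqcont t))
  · -- branch equation
    intro t _
    have hfa := hfabs t
    have key : f (γ t) = (‖q t‖ : ℂ) *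
        Complex.exp (Complex.I * ((Real.pi - t + (q t).arg : ℝ) : ℂ)) := by
      have e2 : Complex.exp (Complex.I * ((Real.pi : ℂ) - (t : ℂ))) *
          Complex.exp (((q t).arg : ℂ) * Complex.I) =
          Complex.exp (Complex.I * ((Real.pi - t + (q t).arg : ℝ) : ℂ)) := by
        rw [← Complex.exp_add]; congr 1; push_cast; ring
      rw [hfq t]
      conv_lhs => rw [← Complex.norm_mul_exp_arg_mul_I (q t)]
      rw [show Complex.exp (Complex.I * ((Real.pi : ℂ) - (t : ℂ))) *
          ((‖q t‖ : ℂ) * Complex.exp (((q t).arg : ℂ) * Complex.I)) =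
          (‖q t‖ : ℂ) * (Complex.exp (Complex.I * ((Real.pi : ℂ) - (t : ℂ))) *
          Complex.exp (((q t).arg : ℂ) * Complex.I)) from by ring, e2]
    calc f (γ t) = (‖q t‖ : ℂ) *
          Complex.exp (Complex.I * ((Real.pi - t + (q t).arg : ℝ) : ℂ)) := key
      _ = _ := by rw [← hfa]
  · -- winding count
    have hq2 : q (2 * Real.pi) = q 0 := by
      have e1 : Complex.exp (Complex.I * ((2 * Real.pi : ℝ) : ℂ)) = 1 := by
        rw [show Complex.I * ((2 * Real.pi : ℝ) : ℂ) = 2 * (Real.pi : ℂ) * Complex.I by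
          push_cast; ring]
        exact Complex.exp_two_pi_mul_I
      have e0 : Complex.exp (Complex.I * ((0 : ℝ) : ℂ)) = 1 := by simp
      simp only [hq, hγ, e1, e0]
    show Real.pi - (2 * Real.pi) + (q (2 * Real.pi)).arg
        - (Real.pi - 0 + (q 0).arg) = 2 * Real.pi * ((-1 : ℤ) : ℝ)
    rw [hq2]
    push_cast
    ring
end

section
/- If f(z) = h(z) - conj(z) with h analytic has an isolated zero at z0 that is sense-preserving (i.e., |h'(z0)| > 1), then the Poincaré index of f at z0 equals +1. -/
open Complex Set

lemma polar_of_re_pos (p : ℂ) (hp : 0 < p.re) :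
    p = (‖p‖ : ℂ) * Complex.exp (Complex.I * (Real.arctan (p.im / p.re) : ℝ)) := by
  have hre : p.re ≠ 0 := ne_of_gt hp
  have hpa : 0 < ‖p‖ := by
    apply norm_pos_iff.mpr; intro h0; rw [h0] at hp; simp at hp
  have hsq : ‖p‖ ^ 2 = p.re ^ 2 + p.im ^ 2 := by
    rw [Complex.sq_norm, Complex.normSq_apply]; ring
  have habs : Real.sqrt (1 + (p.im / p.re) ^ 2) = ‖p‖ / p.re := by
    rw [show (1 : ℝ) + (p.im / p.re) ^ 2 = (‖p‖ / p.re)^2 by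
      field_simp; linarith [hsq]]
    exact Real.sqrt_sq (by positivity)
  have c1 : 1 / (‖p‖ / p.re) = p.re / ‖p‖ := by
    rw [one_div_div]
  have c2 : (p.im / p.re) / (‖p‖ / p.re) = p.im / ‖p‖ := by
    field_simp
  rw [mul_comm Complex.I, Complex.exp_mul_I, ← Complex.ofReal_cos, ← Complex.ofReal_sin,
    Real.cos_arctan, Real.sin_arctan, habs, c1, c2]
  apply Complex.ext <;> simp <;> field_simp


theorem index_sense_preserving (h f : ℂ → ℂ) (z0 : ℂ)
    (hh : AnalyticAt ℂ h z0)
    (hf : ∀ z, f z = h z - (starRingEnd ℂ) z)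
    (hz : f z0 = 0)
    (hiso : ∀ᶠ z in nhdsWithin z0 {z0}ᶜ, f z ≠ 0)
    (hsp : 1 < ‖deriv h z0‖) :
    HasIndex f z0 1 := by
  set a := deriv h z0 with ha
  have ha0 : a ≠ 0 := by
    intro h0; rw [h0] at hsp; simp at hsp; linarith
  have hd : HasDerivAt h a z0 := hh.differentiableAt.hasDerivAt
  set c : ℝ := (‖a‖ - 1) / 2 with hc
  have hcpos : 0 < c := by simp [hc]; linarith
  have hlo := (hasDerivAt_iff_isLittleO.mp hd).def hcpos
  have han := hh.eventually_analyticAt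
  obtain ⟨ε, hε, hP⟩ := Metric.eventually_nhds_iff.mp (hlo.and han)
  have hz0conj : h z0 = (starRingEnd ℂ) z0 := by
    have h0 := hf z0; rw [hz] at h0
    exact sub_eq_zero.mp h0.symm
  refine ⟨ε, hε, fun r hr hrε => ?_⟩
  set w : ℝ → ℂ := fun t => (r : ℂ) * Complex.exp (Complex.I * t) with hw
  have habsw : ∀ t : ℝ, ‖w t‖ = r := by
    intro t
    simp [hw, Complex.norm_exp, abs_of_pos hr]
  have hw0 : ∀ t : ℝ, w t ≠ 0 := fun t =>
    mul_ne_zero (by exact_mod_cast hr.ne') (Complex.exp_ne_zero _)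
  have hdist : ∀ t : ℝ, dist (z0 + w t) z0 < ε := by
    intro t
    rw [Complex.dist_eq, add_sub_cancel_left, habsw]
    exact hrε
  set p : ℝ → ℂ := fun t => f (z0 + w t) / (w t * a) with hp
  have hfp : ∀ t : ℝ, f (z0 + w t) = w t * a * p t := by
    intro t
    rw [hp]
    field_simp
    exact (mul_div_cancel_left₀ _ (hw0 t)).symm
  have hest : ∀ t : ℝ, ‖p t - 1‖ < 1 := by
    intro t
    have h1 : f (z0 + w t) - w t * a
        = (h (z0 + w t) - h z0 - (z0 + w t - z0) • a) - (starRingEnd ℂ) (w t) := by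
      rw [hf, smul_eq_mul]
      rw [show (starRingEnd ℂ) (z0 + w t) = (starRingEnd ℂ) z0 + (starRingEnd ℂ) (w t) by
        rw [map_add], ← hz0conj]
      ring
    have h2 := (hP (hdist t)).1
    have habs2 : ‖f (z0 + w t) - w t * a‖ ≤ c * r + r := by
      rw [h1]
      refine le_trans (norm_sub_le _ _) ?_
      have e3 : ‖(starRingEnd ℂ) (w t)‖ = r := by
        rw [Complex.norm_conj, habsw]
      rw [e3]
      have : ‖z0 + w t - z0‖ = r := by rw [add_sub_cancel_left]; exact habsw t
      rw [this] at h2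
      linarith
    have h3 : p t - 1 = (f (z0 + w t) - w t * a) / (w t * a) := by
      show f (z0 + w t) / (w t * a) - 1 = _
      rw [sub_div, div_self (mul_ne_zero (hw0 t) ha0)]
    rw [h3, norm_div, norm_mul, habsw, div_lt_one (by positivity)]
    calc ‖f (z0 + w t) - w t * a‖ ≤ c * r + r := habs2
      _ < r * ‖a‖ := by
        rw [hc]; nlinarith [hsp, hr]
  have hrep : ∀ t : ℝ, 0 < (p t).re := by
    intro t
    have h5 := abs_lt.mp (lt_of_le_of_lt (Complex.abs_re_le_norm (p t - 1)) (hest t))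
    have h6 : (p t - 1).re = (p t).re - 1 := by simp
    rw [h6] at h5
    linarith [h5.1]
  have hwc : Continuous w := by
    apply continuous_const.mul
    exact Complex.continuous_exp.comp (continuous_const.mul Complex.continuous_ofReal)
  have hpc : Continuous p := by
    rw [hp]
    apply Continuous.div
    · have e : (fun t : ℝ => f (z0 + w t))
          = fun t => h (z0 + w t) - (starRingEnd ℂ) (z0 + w t) := by
        funext t; rw [hf]
      rw [e]
      apply Continuous.sub
      · refine continuous_iff_continuousAt.mpr fun t => ?_
        have c1 : ContinuousAt h (z0 + w t) := (hP (hdist t)).2.continuousAt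
        have c2 : ContinuousAt (fun x : ℝ => z0 + w x) t :=
          (continuous_const.add hwc).continuousAt
        exact ContinuousAt.comp (f := fun x : ℝ => z0 + w x) (x := t) c1 c2
      · exact Complex.continuous_conj.comp (continuous_const.add hwc)
    · exact hwc.mul continuous_const
    · intro t; exact mul_ne_zero (hw0 t) ha0
  set θ : ℝ → ℝ := fun t => t + Complex.arg a + Real.arctan ((p t).im / (p t).re) with hθ
  refine ⟨θ, ?_, ?_, ?_⟩
  · apply Continuous.continuousOn
    refine (continuous_id.add continuous_const).add ?_
    exact Real.continuous_arctan.comp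
      ((Complex.continuous_im.comp hpc).div (Complex.continuous_re.comp hpc)
        (fun t => (hrep t).ne'))
  · intro t ht
    show f (z0 + w t) = (‖f (z0 + w t)‖ : ℂ) * Complex.exp (Complex.I * ((θ t : ℝ) : ℂ))
    have e1 : w t * a * p t
        = ((r : ℂ) * Complex.exp (Complex.I * t))
          * ((‖a‖ : ℂ) * Complex.exp ((Complex.arg a : ℝ) * Complex.I))
          * ((‖p t‖ : ℂ)
              * Complex.exp (Complex.I * (Real.arctan ((p t).im / (p t).re) : ℝ))) := by
      rw [Complex.norm_mul_exp_arg_mul_I, ← polar_of_re_pos _ (hrep t)]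
    have e2 : ‖w t * a * p t‖ = r * ‖a‖ * ‖p t‖ := by
      rw [norm_mul, norm_mul, habsw]
    have e3 : Complex.exp (Complex.I * ((θ t : ℝ) : ℂ))
        = Complex.exp (Complex.I * t) * Complex.exp ((Complex.arg a : ℝ) * Complex.I)
          * Complex.exp (Complex.I * (Real.arctan ((p t).im / (p t).re) : ℝ)) := by
      rw [← Complex.exp_add, ← Complex.exp_add]
      congr 1
      rw [hθ]
      push_cast
      ring
    rw [hfp t, e2, e3, e1]
    push_cast
    ring
  · have hw2π : w (2 * Real.pi) = w 0 := by
      rw [hw]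
      simp only
      rw [show Complex.I * ((2 * Real.pi : ℝ) : ℂ) = 2 * Real.pi * Complex.I by push_cast; ring,
        Complex.exp_two_pi_mul_I]
      norm_num
    have hp2π : p (2 * Real.pi) = p 0 := by rw [hp]; simp only [hw2π]
    rw [hθ]
    simp only [hp2π]
    push_cast
    ring
end

section
/- Let h be a rational function of type (j, n) with j ≤ n and degree at least 2, and f(z) = h(z) - conj(z). Then for all sufficiently large R, the winding of f along the circle |z| = R equals -1. -/
open Complex Set

private lemma eval_norm_le_aux (r : Polynomial ℂ) {z : ℂ} (hz : 1 ≤ ‖z‖) {n : ℕ}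
    (hn : r.natDegree ≤ n) :
    ‖r.eval z‖ ≤ (∑ i ∈ Finset.range (n + 1), ‖r.coeff i‖) * ‖z‖ ^ n := by
  rw [Polynomial.eval_eq_sum_range' (Nat.lt_succ_of_le hn)]
  calc ‖∑ i ∈ Finset.range (n + 1), r.coeff i * z ^ i‖
      ≤ ∑ i ∈ Finset.range (n + 1), ‖r.coeff i * z ^ i‖ := norm_sum_le _ _
    _ ≤ ∑ i ∈ Finset.range (n + 1), ‖r.coeff i‖ * ‖z‖ ^ n := by
        refine Finset.sum_le_sum fun i hi => ?_
        rw [norm_mul, norm_pow]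
        exact mul_le_mul_of_nonneg_left
          (pow_le_pow_right₀ hz (Nat.lt_succ_iff.mp (Finset.mem_range.mp hi)))
          (norm_nonneg _)
    _ = (∑ i ∈ Finset.range (n + 1), ‖r.coeff i‖) * ‖z‖ ^ n := by rw [Finset.sum_mul]

private lemma key_bound (p q : Polynomial ℂ) (hq : q ≠ 0) (hdeg : p.degree ≤ q.degree)
    (hdeg1 : 1 ≤ q.natDegree) :
    ∃ R0 : ℝ, 1 ≤ R0 ∧ ∀ z : ℂ, R0 < ‖z‖ →
      q.eval z ≠ 0 ∧ 2 * ‖p.eval z‖ ≤ ‖z‖ * ‖q.eval z‖ := by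
  obtain ⟨m, hm⟩ : ∃ m, q.natDegree = m + 1 :=
    ⟨q.natDegree - 1, (Nat.succ_pred_eq_of_pos hdeg1).symm⟩
  set a := q.leadingCoeff with ha
  have ha0 : a ≠ 0 := Polynomial.leadingCoeff_ne_zero.mpr hq
  have hapos : 0 < ‖a‖ := norm_pos_iff.mpr ha0
  set Sp := ∑ i ∈ Finset.range (q.natDegree + 1), ‖p.coeff i‖ with hSp
  set Sr := ∑ i ∈ Finset.range (m + 1), ‖q.eraseLead.coeff i‖ with hSr
  have hSp0 : 0 ≤ Sp := Finset.sum_nonneg fun i _ => norm_nonneg _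
  have hSr0 : 0 ≤ Sr := Finset.sum_nonneg fun i _ => norm_nonneg _
  refine ⟨max 1 ((2 * Sp + Sr + 1) / ‖a‖), le_max_left _ _, fun z hz => ?_⟩
  set R := ‖z‖ with hR
  have hR1 : 1 < R := lt_of_le_of_lt (le_max_left _ _) hz
  have hRa : 2 * Sp + Sr + 1 < ‖a‖ * R := by
    have := lt_of_le_of_lt (le_max_right 1 ((2 * Sp + Sr + 1) / ‖a‖)) hz
    rw [div_lt_iff₀ hapos] at this
    linarith
  have hqsplit : q.eval z = q.eraseLead.eval z + a * z ^ q.natDegree := by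
    have h := congrArg (Polynomial.eval z) (Polynomial.eraseLead_add_C_mul_X_pow q)
    simp only [Polynomial.eval_add, Polynomial.eval_mul, Polynomial.eval_C,
      Polynomial.eval_pow, Polynomial.eval_X] at h
    exact h.symm
  have hrle : ‖q.eraseLead.eval z‖ ≤ Sr * R ^ m := by
    refine eval_norm_le_aux _ hR1.le ?_
    have := q.eraseLead_natDegree_le
    omega
  have hple : ‖p.eval z‖ ≤ Sp * R ^ q.natDegree :=
    eval_norm_le_aux _ hR1.le (Polynomial.natDegree_le_natDegree hdeg)
  have htri : ‖a‖ * R ^ q.natDegree - ‖q.eraseLead.eval z‖ ≤ ‖q.eval z‖ := by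
    have h1 : ‖a * z ^ q.natDegree‖ ≤ ‖q.eval z‖ + ‖q.eraseLead.eval z‖ := by
      calc ‖a * z ^ q.natDegree‖ = ‖q.eval z - q.eraseLead.eval z‖ := by
            rw [hqsplit]; ring_nf
        _ ≤ ‖q.eval z‖ + ‖q.eraseLead.eval z‖ := norm_sub_le _ _
    rw [norm_mul, norm_pow] at h1
    linarith
  have hRm1 : (1:ℝ) ≤ R ^ m := one_le_pow₀ hR1.le
  have hRn : R ^ q.natDegree = R ^ m * R := by rw [hm, pow_succ]
  have hqlow : R ^ m * (2 * Sp + 1) ≤ ‖q.eval z‖ := by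
    have h2 : ‖a‖ * R ^ q.natDegree - Sr * R ^ m ≤ ‖q.eval z‖ := by linarith
    rw [hRn] at h2
    nlinarith
  have hqpos : 0 < ‖q.eval z‖ := lt_of_lt_of_le (by nlinarith) hqlow
  refine ⟨fun h => by simp [h] at hqpos, ?_⟩
  have h2 : 2 * ‖p.eval z‖ ≤ 2 * Sp * (R ^ m * R) := by rw [← hRn]; nlinarith
  have h3 : R * (R ^ m * (2 * Sp + 1)) ≤ R * ‖q.eval z‖ :=
    mul_le_mul_of_nonneg_left hqlow (by linarith)
  nlinarith

theorem winding_rational_type_le (p q : Polynomial ℂ) (f : ℂ → ℂ) (hq : q ≠ 0)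
    (hcop : IsCoprime p q)
    (hdeg : p.degree ≤ q.degree) (hdeg2 : 2 ≤ q.natDegree)
    (hf : ∀ z, f z = p.eval z / q.eval z - (starRingEnd ℂ) z) :
    ∃ R0 : ℝ, ∀ R : ℝ, R0 < R → WindingOn f 0 R (-1) := by
  obtain ⟨R0, hR01, hkey⟩ := key_bound p q hq hdeg (by omega)
  refine ⟨R0, fun R hR => ?_⟩
  have hR1 : (1:ℝ) < R := lt_of_le_of_lt hR01 hR
  have hRpos : (0:ℝ) < R := by linarith
  have hRC : (R:ℂ) ≠ 0 := by exact_mod_cast hRpos.ne'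
  set z : ℝ → ℂ := fun t => (R:ℂ) * Complex.exp (Complex.I * t) with hzdef
  have hnexp : ∀ w : ℂ, ‖Complex.exp w‖ = Real.exp w.re := fun w => by
    rw [Complex.norm_exp]
  have hznorm : ∀ t : ℝ, ‖z t‖ = R := by
    intro t
    have h0 : ((Complex.I * (t:ℂ)).re) = 0 := by simp
    rw [hzdef]
    simp only [norm_mul, hnexp, h0, Real.exp_zero, mul_one, Complex.norm_real,
      Real.norm_eq_abs]
    exact abs_of_pos hRpos
  have hq' : ∀ t : ℝ, q.eval (z t) ≠ 0 := fun t => (hkey (z t) (by rw [hznorm]; exact hR)).1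
  have hb : ∀ t : ℝ, 2 * ‖p.eval (z t)‖ ≤ R * ‖q.eval (z t)‖ := by
    intro t
    have h := (hkey (z t) (by rw [hznorm]; exact hR)).2
    rwa [hznorm] at h
  set g : ℝ → ℂ := fun t =>
    1 - Complex.exp (Complex.I * t) * (p.eval (z t) / ((R:ℂ) * q.eval (z t))) with hgdef
  have hgRe : ∀ t : ℝ, (1:ℝ)/2 ≤ (g t).re := by
    intro t
    have hw : ‖Complex.exp (Complex.I * t) * (p.eval (z t) / ((R:ℂ) * q.eval (z t)))‖ ≤ 1/2 := by
      have hre0 : ((Complex.I * (t:ℂ)).re) = 0 := by simp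
      have hnR : ‖(R:ℂ)‖ = R := by
        rw [Complex.norm_real, Real.norm_eq_abs]; exact abs_of_pos hRpos
      rw [norm_mul, norm_div, norm_mul, hnexp, hre0, Real.exp_zero, one_mul, hnR]
      rw [div_le_iff₀ (mul_pos hRpos (norm_pos_iff.mpr (hq' t)))]
      linarith [hb t]
    have h1 := Complex.abs_re_le_norm
      (Complex.exp (Complex.I * t) * (p.eval (z t) / ((R:ℂ) * q.eval (z t))))
    have hre : (g t).re =
        1 - (Complex.exp (Complex.I * t) * (p.eval (z t) / ((R:ℂ) * q.eval (z t)))).re := by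
      simp [hgdef]
    rw [hre]
    have h2 : (Complex.exp (Complex.I * t) *
        (p.eval (z t) / ((R:ℂ) * q.eval (z t)))).re ≤
        ‖Complex.exp (Complex.I * t) * (p.eval (z t) / ((R:ℂ) * q.eval (z t)))‖ := by
      exact le_trans (le_abs_self _) h1
    linarith [le_trans h2 hw]
  have hgslit : ∀ t : ℝ, g t ∈ Complex.slitPlane := fun t => Or.inl (by linarith [hgRe t])
  have hcz : Continuous z :=
    continuous_const.mul (Complex.continuous_exp.comp
      (continuous_const.mul Complex.continuous_ofReal))
  have hcg : Continuous g := by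
    refine continuous_const.sub (Continuous.mul (Complex.continuous_exp.comp
      (continuous_const.mul Complex.continuous_ofReal)) ?_)
    exact Continuous.div ((Polynomial.continuous p).comp hcz)
      (continuous_const.mul ((Polynomial.continuous q).comp hcz))
      (fun t => mul_ne_zero hRC (hq' t))
  set θ : ℝ → ℝ := fun t => Real.pi - t + (g t).arg with hθdef
  have hcθ : Continuous θ := by
    refine (continuous_const.sub continuous_id).add ?_
    exact continuous_iff_continuousAt.mpr fun t =>
      (Complex.continuousAt_arg (hgslit t)).comp hcg.continuousAt
  have hee : ∀ t : ℝ, Complex.exp (-(Complex.I * t)) * Complex.exp (Complex.I * t) = 1 := by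
    intro t
    rw [← Complex.exp_add, neg_add_cancel, Complex.exp_zero]
  have hfw : ∀ t : ℝ, f (z t) = -(R:ℂ) * Complex.exp (-(Complex.I * t)) * g t := by
    intro t
    have hconj : (starRingEnd ℂ) (z t) = (R:ℂ) * Complex.exp (-(Complex.I * t)) := by
      rw [hzdef]
      simp only [map_mul, Complex.conj_ofReal, ← Complex.exp_conj]
      congr 2
      simp [Complex.conj_I]
    have h1 : (R:ℂ) * (p.eval (z t) / ((R:ℂ) * q.eval (z t))) =
        p.eval (z t) / q.eval (z t) := by
      field_simp
    rw [hf, hconj, hgdef]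
    calc p.eval (z t) / q.eval (z t) - (R:ℂ) * Complex.exp (-(Complex.I * t))
        = Complex.exp (-(Complex.I * t)) * Complex.exp (Complex.I * t) *
            ((R:ℂ) * (p.eval (z t) / ((R:ℂ) * q.eval (z t)))) -
            (R:ℂ) * Complex.exp (-(Complex.I * t)) := by rw [hee t, h1, one_mul]
      _ = -(R:ℂ) * Complex.exp (-(Complex.I * t)) *
            (1 - Complex.exp (Complex.I * t) * (p.eval (z t) / ((R:ℂ) * q.eval (z t)))) := by
          ring
  have habs : ∀ t : ℝ, (‖f (z t)‖ : ℝ) = R * ‖g t‖ := by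
    intro t
    rw [hfw t, norm_mul, norm_mul, norm_neg]
    have h1 : ‖(R:ℂ)‖ = R := by
      rw [Complex.norm_real, Real.norm_eq_abs]; exact abs_of_pos hRpos
    have h2 : ‖Complex.exp (-(Complex.I * t))‖ = 1 := by
      rw [Complex.norm_exp]
      have : ((-(Complex.I * (t:ℂ))).re) = 0 := by simp
      rw [this, Real.exp_zero]
    rw [h1, h2, mul_one]
  refine ⟨θ, hcθ.continuousOn, fun t _ => ?_, ?_⟩
  · have hzt : (0:ℂ) + (R:ℂ) * Complex.exp (Complex.I * t) = z t := by rw [zero_add]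
    rw [hzt]
    have hgeq : (‖g t‖ : ℂ) * Complex.exp (Complex.I * ((g t).arg : ℂ)) = g t := by
      rw [mul_comm Complex.I]
      exact Complex.norm_mul_exp_arg_mul_I _
    have hexpθ : Complex.exp (Complex.I * ((θ t : ℝ) : ℂ)) =
        -(Complex.exp (-(Complex.I * t)) * Complex.exp (Complex.I * ((g t).arg : ℂ))) := by
      have harg : Complex.I * ((θ t : ℝ) : ℂ) =
          (Real.pi : ℂ) * Complex.I + (-(Complex.I * t) + Complex.I * ((g t).arg : ℂ)) := by
        rw [hθdef]
        push_cast
        ring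
      rw [harg, Complex.exp_add, Complex.exp_add, Complex.exp_pi_mul_I]
      ring
    have habsC : ((‖f (z t)‖ : ℝ) : ℂ) = (R:ℂ) * (‖g t‖ : ℂ) := by
      rw [habs t]; push_cast; ring
    rw [habsC, hexpθ]
    conv_lhs => rw [hfw t]
    linear_combination ((R:ℂ) * Complex.exp (-(Complex.I * t))) * hgeq
  · have he2 : Complex.exp (Complex.I * ((2 * Real.pi : ℝ) : ℂ)) = 1 := by
      rw [show Complex.I * ((2 * Real.pi : ℝ) : ℂ) = 2 * (Real.pi : ℂ) * Complex.I by
        push_cast; ring]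
      exact Complex.exp_two_pi_mul_I
    have he0 : Complex.exp (Complex.I * ((0 : ℝ) : ℂ)) = 1 := by
      simp
    have hg2 : g (2 * Real.pi) = g 0 := by
      rw [hgdef]
      simp only [hzdef]
      rw [he2, he0]
    rw [hθdef]
    simp only [hg2]
    push_cast
    ring
end

section
/- Let h be a polynomial of degree n ≥ 2 and f(z) = h(z) - conj(z). Then for all sufficiently large R, the winding of f along the circle |z| = R equals n. -/
open Complex Set

theorem winding_polynomial (p : Polynomial ℂ) (f : ℂ → ℂ)
    (hdeg : 2 ≤ p.natDegree)
    (hf : ∀ z, f z = p.eval z - (starRingEnd ℂ) z) :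
    ∃ R0 : ℝ, ∀ R : ℝ, R0 < R → WindingOn f 0 R (p.natDegree : ℤ) := by
  have hf' : f = fun z => p.eval z - (starRingEnd ℂ) z := funext hf
  subst hf'
  have hp0 : p ≠ 0 := by
    intro h
    rw [h, Polynomial.natDegree_zero] at hdeg
    omega
  set n := p.natDegree with hn
  set a := p.leadingCoeff with haa
  have ha : a ≠ 0 := Polynomial.leadingCoeff_ne_zero.mpr hp0
  have haabs : 0 < ‖a‖ := norm_pos_iff.mpr ha
  set M : ℝ := ∑ i ∈ Finset.range n, ‖p.coeff i‖ with hM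
  have hM0 : 0 ≤ M := Finset.sum_nonneg fun i _ => norm_nonneg _
  refine ⟨max 1 ((M + 1) / ‖a‖), ?_⟩
  intro R hR
  have hR1 : 1 < R := lt_of_le_of_lt (le_max_left _ _) hR
  have hR0 : 0 < R := by linarith
  have hRa : M + 1 < ‖a‖ * R := by
    have h := lt_of_le_of_lt (le_max_right 1 ((M + 1) / ‖a‖)) hR
    rw [div_lt_iff₀ haabs] at h
    linarith
  -- key estimate
  have key : ∀ w : ℂ, ‖w‖ = R →
      ‖(p.eval w - (starRingEnd ℂ) w) - a * w ^ n‖ < ‖a‖ * R ^ n := by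
    intro w hw
    have hsplit : p.eval w - a * w ^ n = ∑ i ∈ Finset.range n, p.coeff i * w ^ i := by
      rw [Polynomial.eval_eq_sum_range (p := p) w, Finset.sum_range_succ,
        Polynomial.coeff_natDegree, ← hn, ← haa, add_sub_cancel_right]
    have hb1 : ‖p.eval w - a * w ^ n‖ ≤ M * R ^ (n - 1) := by
      rw [hsplit]
      refine le_trans (norm_sum_le _ _) ?_
      rw [hM, Finset.sum_mul]
      refine Finset.sum_le_sum fun i hi => ?_
      rw [norm_mul, norm_pow, hw]
      exact mul_le_mul_of_nonneg_left
        (pow_le_pow_right₀ (le_of_lt hR1) (by have := Finset.mem_range.mp hi; omega))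
        (norm_nonneg _)
    have hb2 : ‖(starRingEnd ℂ) w‖ ≤ R ^ (n - 1) := by
      rw [Complex.norm_conj, hw]
      calc R = R ^ 1 := (pow_one R).symm
        _ ≤ R ^ (n - 1) := pow_le_pow_right₀ (le_of_lt hR1) (by omega)
    have hb : ‖(p.eval w - (starRingEnd ℂ) w) - a * w ^ n‖
        ≤ (M + 1) * R ^ (n - 1) := by
      have heq : (p.eval w - (starRingEnd ℂ) w) - a * w ^ n
          = (p.eval w - a * w ^ n) - (starRingEnd ℂ) w := by ring
      rw [heq]
      refine le_trans (norm_sub_le _ _) ?_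
      nlinarith [pow_pos hR0 (n - 1)]
    refine lt_of_le_of_lt hb ?_
    have hpow : R ^ n = R * R ^ (n - 1) := by
      rw [← pow_succ']
      congr 1
      omega
    rw [hpow]
    have hpos : 0 < R ^ (n - 1) := pow_pos hR0 _
    nlinarith
  -- the circle map and normalized function
  set z : ℝ → ℂ := fun t => (R : ℂ) * Complex.exp (Complex.I * t) with hzdef
  have hzcont : Continuous z :=
    continuous_const.mul (Complex.continuous_exp.comp
      (continuous_const.mul Complex.continuous_ofReal))
  have habsz : ∀ t : ℝ, ‖z t‖ = R := by
    intro t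
    show ‖(R : ℂ) * Complex.exp (Complex.I * t)‖ = R
    rw [norm_mul, Complex.norm_real, Real.norm_of_nonneg hR0.le,
      mul_comm Complex.I (t : ℂ), Complex.norm_exp_ofReal_mul_I, mul_one]
  have hzne : ∀ t : ℝ, z t ≠ 0 := by
    intro t h
    have h2 := habsz t
    rw [h] at h2
    simp at h2
    linarith
  have hdne : ∀ t : ℝ, a * z t ^ n ≠ 0 := fun t =>
    mul_ne_zero ha (pow_ne_zero _ (hzne t))
  set u : ℝ → ℂ := fun t => (p.eval (z t) - (starRingEnd ℂ) (z t)) / (a * z t ^ n) with hudef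
  have habsd : ∀ t : ℝ, ‖a * z t ^ n‖ = ‖a‖ * R ^ n := by
    intro t
    rw [norm_mul, norm_pow, habsz]
  have hu1 : ∀ t : ℝ, ‖u t - 1‖ < 1 := by
    intro t
    have heq : u t - 1
        = ((p.eval (z t) - (starRingEnd ℂ) (z t)) - a * z t ^ n) / (a * z t ^ n) :=
      div_sub_one (hdne t)
    rw [heq, norm_div, habsd, div_lt_one (by positivity)]
    exact key (z t) (habsz t)
  have hure : ∀ t : ℝ, 0 < (u t).re := by
    intro t
    have h1 := hu1 t
    have h2 : |(u t - 1).re| ≤ ‖u t - 1‖ := Complex.abs_re_le_norm _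
    have h3 : (u t - 1).re = (u t).re - 1 := by simp
    have h4 : |(u t).re - 1| < 1 := by rw [← h3]; exact lt_of_le_of_lt h2 h1
    have h5 := abs_lt.mp h4
    linarith [h5.1]
  have hfu : ∀ t : ℝ, p.eval (z t) - (starRingEnd ℂ) (z t) = a * z t ^ n * u t := by
    intro t
    show _ = a * z t ^ n * ((p.eval (z t) - (starRingEnd ℂ) (z t)) / (a * z t ^ n))
    rw [mul_div_cancel₀ _ (hdne t)]
  -- the argument branch
  set θ : ℝ → ℝ := fun t => Complex.arg a + n * t + Complex.arg (u t) with hθdef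
  have hucont : Continuous u := by
    apply Continuous.div
    · exact (p.continuous.comp hzcont).sub (Complex.continuous_conj.comp hzcont)
    · exact continuous_const.mul (hzcont.pow n)
    · exact hdne
  refine ⟨θ, ?_, ?_, ?_⟩
  · -- continuity
    have hargcont : Continuous fun t => Complex.arg (u t) := by
      rw [continuous_iff_continuousAt]
      intro t
      exact (Complex.continuousAt_arg (Or.inl (hure t))).comp hucont.continuousAt
    have : Continuous θ :=
      (continuous_const.add (continuous_const.mul continuous_id)).add hargcont
    exact this.continuousOn
  · -- representation
    intro t _
    simp only [zero_add]
    show p.eval (z t) - (starRingEnd ℂ) (z t)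
        = (‖p.eval (z t) - (starRingEnd ℂ) (z t)‖ : ℂ)
          * Complex.exp (Complex.I * (θ t : ℝ))
    have hzn : z t ^ n = (R : ℂ) ^ n * Complex.exp (((n * t : ℝ) : ℂ) * Complex.I) := by
      show ((R : ℂ) * Complex.exp (Complex.I * t)) ^ n = _
      rw [mul_pow, ← Complex.exp_nat_mul]
      congr 1
      push_cast
      ring
    have hA : (‖a‖ : ℂ) * Complex.exp ((Complex.arg a : ℂ) * Complex.I) = a :=
      Complex.norm_mul_exp_arg_mul_I a
    have hU : (‖u t‖ : ℂ)
        * Complex.exp ((Complex.arg (u t) : ℂ) * Complex.I) = u t :=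
      Complex.norm_mul_exp_arg_mul_I (u t)
    have habsf : ‖p.eval (z t) - (starRingEnd ℂ) (z t)‖
        = ‖a‖ * R ^ n * ‖u t‖ := by
      rw [hfu t, norm_mul, habsd]
    calc p.eval (z t) - (starRingEnd ℂ) (z t) = a * z t ^ n * u t := hfu t
      _ = ((‖a‖ : ℂ) * Complex.exp ((Complex.arg a : ℂ) * Complex.I))
            * ((R : ℂ) ^ n * Complex.exp (((n * t : ℝ) : ℂ) * Complex.I))
            * ((‖u t‖ : ℂ)
              * Complex.exp ((Complex.arg (u t) : ℂ) * Complex.I)) := by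
          rw [hA, hU, ← hzn]
      _ = (‖p.eval (z t) - (starRingEnd ℂ) (z t)‖ : ℂ)
            * Complex.exp (Complex.I * (θ t : ℝ)) := by
          rw [habsf]
          rw [show Complex.I * ((θ t : ℝ) : ℂ)
              = (Complex.arg a : ℂ) * Complex.I + ((n * t : ℝ) : ℂ) * Complex.I
                + (Complex.arg (u t) : ℂ) * Complex.I by
            simp only [hθdef]
            push_cast
            ring]
          rw [Complex.exp_add, Complex.exp_add]
          push_cast
          ring
  · -- total variation
    have hu2π : u (2 * Real.pi) = u 0 := by
      have hz2π : z (2 * Real.pi) = z 0 := by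
        show (R : ℂ) * Complex.exp (Complex.I * ((2 * Real.pi : ℝ) : ℂ))
            = (R : ℂ) * Complex.exp (Complex.I * ((0 : ℝ) : ℂ))
        rw [show Complex.I * ((2 * Real.pi : ℝ) : ℂ)
            = 2 * Real.pi * Complex.I by push_cast; ring, Complex.exp_two_pi_mul_I]
        simp
      show (p.eval (z (2 * Real.pi)) - (starRingEnd ℂ) (z (2 * Real.pi)))
          / (a * z (2 * Real.pi) ^ n) = _
      rw [hz2π]
    show Complex.arg a + n * (2 * Real.pi) + Complex.arg (u (2 * Real.pi))
        - (Complex.arg a + n * 0 + Complex.arg (u 0)) = 2 * Real.pi * ((n : ℤ) : ℝ)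
    rw [hu2π]
    push_cast
    ring
end

section
/- The function f(z) = -z/(z² - 1) - conj(z) has exactly one zero, namely z = 0, and this zero is singular (i.e., |h'(0)| = 1 where h(z) = -z/(z²-1)). -/
open Complex

theorem example_index_plus_one_zeros :
    let h : ℂ → ℂ := fun z => -z / (z ^ 2 - 1)
    let f : ℂ → ℂ := fun z => h z - (starRingEnd ℂ) z
    (∀ z : ℂ, z ≠ 1 → z ≠ -1 → (f z = 0 ↔ z = 0)) ∧
    ‖deriv h 0‖ = 1 := by
  intro h f
  constructor
  · intro z hz1 hz2
    have hden : z ^ 2 - 1 ≠ 0 := by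
      intro hc
      have : (z - 1) * (z + 1) = 0 := by ring_nf; linear_combination hc
      rcases mul_eq_zero.mp this with h' | h'
      · exact hz1 (sub_eq_zero.mp h')
      · exact hz2 (by linear_combination h')
    constructor
    · intro hf
      have heq : -z - (starRingEnd ℂ) z * (z ^ 2 - 1) = 0 := by
        have : -z / (z ^ 2 - 1) = (starRingEnd ℂ) z := sub_eq_zero.mp hf
        field_simp at this
        linear_combination this
      have hre := congrArg Complex.re heq
      have him := congrArg Complex.im heq
      set x := z.re
      set y := z.im
      simp [Complex.sub_re, Complex.sub_im, Complex.mul_re, Complex.mul_im,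
        Complex.conj_re, Complex.conj_im, pow_two] at hre him
      have hy : y = 0 := by
        have h4 : y * (x ^ 2 + y ^ 2 + 2) = 0 := by linear_combination -him
        rcases mul_eq_zero.mp h4 with h' | h'
        · exact h'
        · nlinarith [sq_nonneg x, sq_nonneg y]
      have h3 : x ^ 3 = 0 := by linear_combination -hre - (x * y) * hy
      have hx : x = 0 := pow_eq_zero_iff (by norm_num : (3:ℕ) ≠ 0) |>.mp h3
      exact Complex.ext hx hy
    · intro hz; simp [f, h, hz]
  · have h1 : HasDerivAt (fun z : ℂ => -z) (-1) 0 := (hasDerivAt_id (0:ℂ)).neg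
    have h2 : HasDerivAt (fun z : ℂ => z ^ 2 - 1) (0 : ℂ) 0 := by
      have := (hasDerivAt_pow 2 (0:ℂ)).sub_const 1
      simpa using this
    have hd : HasDerivAt h (((-1) * ((0:ℂ) ^ 2 - 1) - (-0) * 0) / ((0:ℂ) ^ 2 - 1) ^ 2) 0 := by
      simpa [Pi.div_def] using h1.div h2 (by norm_num)
    have : deriv h 0 = 1 := by
      have := hd.deriv
      rw [this]; norm_num
    rw [this]; simp
end

section
/- The function f(z) = z/(z² - 1) - conj(z) has exactly three zeros: 0, √2, and -√2. The zero 0 is singular (|h'(0)| = 1), while ±√2 are sense-preserving zeros with |h'(±√2)| = 3. -/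
open Complex

lemma sqrt2_sq : ((Real.sqrt 2 : ℝ) : ℂ) ^ 2 = 2 := by
  rw [← Complex.ofReal_pow, Real.sq_sqrt (by norm_num : (0:ℝ) ≤ 2)]
  norm_num

lemma deriv_h (z : ℂ) (hne : z ^ 2 - 1 ≠ 0) :
    deriv (fun z : ℂ => z / (z ^ 2 - 1)) z = (-(z ^ 2) - 1) / (z ^ 2 - 1) ^ 2 := by
  have h1 : HasDerivAt (fun z : ℂ => z ^ 2 - 1) (2 * z) z := by
    simpa using (hasDerivAt_pow 2 z).sub_const 1
  have h2 := ((hasDerivAt_id z).div h1 hne).deriv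
  simp only [id_eq] at h2
  rw [show (fun z : ℂ => z / (z ^ 2 - 1)) = (id / fun z => z ^ 2 - 1) from rfl, h2]
  field_simp
  ring

lemma zero_char (z : ℂ) (hz : z = (starRingEnd ℂ) z * (z ^ 2 - 1)) :
    z = 0 ∨ z ^ 2 = 2 := by
  by_cases h0 : z = 0
  · exact Or.inl h0
  right
  have hN : Complex.normSq z ≠ 0 := by simpa using h0
  have hkey : z ^ 2 * ((Complex.normSq z : ℂ) - 1) = (Complex.normSq z : ℂ) := by
    linear_combination -z * hz - (z ^ 2 - 1) * Complex.mul_conj z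
  have habs := congrArg norm hkey
  rw [norm_mul] at habs
  have h1 : ‖z ^ 2‖ = Complex.normSq z := by rw [norm_pow, Complex.sq_norm]
  have h2 : ‖(Complex.normSq z : ℂ) - 1‖ = |Complex.normSq z - 1| := by
    rw [show ((Complex.normSq z : ℂ) - 1) = ((Complex.normSq z - 1 : ℝ) : ℂ) by push_cast; ring,
      Complex.norm_real, Real.norm_eq_abs]
  have h3 : ‖(Complex.normSq z : ℂ)‖ = Complex.normSq z := by
    rw [Complex.norm_real, Real.norm_eq_abs]; exact abs_of_nonneg (Complex.normSq_nonneg z)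
  rw [h1, h2, h3] at habs
  have h4 : |Complex.normSq z - 1| = 1 :=
    mul_left_cancel₀ hN (by rw [habs, mul_one])
  have h5 : Complex.normSq z = 2 := by
    rcases (abs_eq (by norm_num : (0:ℝ) ≤ 1)).mp h4 with h | h
    · linarith
    · exfalso; exact hN (by linarith)
  rw [h5] at hkey
  push_cast at hkey
  linear_combination hkey

theorem example_index_minus_one_zeros :
    let h : ℂ → ℂ := fun z => z / (z ^ 2 - 1)
    let f : ℂ → ℂ := fun z => h z - (starRingEnd ℂ) z
    (∀ z : ℂ, z ≠ 1 → z ≠ -1 →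
      (f z = 0 ↔ z = 0 ∨ z = (Real.sqrt 2 : ℂ) ∨ z = -(Real.sqrt 2 : ℂ))) ∧
    ‖deriv h 0‖ = 1 ∧
    ‖deriv h (Real.sqrt 2 : ℂ)‖ = 3 ∧
    ‖deriv h (-(Real.sqrt 2 : ℂ))‖ = 3 := by
  intro h f
  have hs2 : ((Real.sqrt 2 : ℝ) : ℂ) ^ 2 = 2 := sqrt2_sq
  refine ⟨?_, ?_, ?_, ?_⟩
  · intro z hz1 hz2
    have hne : z ^ 2 - 1 ≠ 0 := by
      intro hc
      have : (z - 1) * (z + 1) = 0 := by linear_combination hc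
      rcases mul_eq_zero.mp this with h' | h'
      · exact hz1 (by linear_combination h')
      · exact hz2 (by linear_combination h')
    constructor
    · intro hf0
      have heq : z = (starRingEnd ℂ) z * (z ^ 2 - 1) := by
        have : z / (z ^ 2 - 1) = (starRingEnd ℂ) z := by
          have := sub_eq_zero.mp hf0
          simpa [f, h] using this
        field_simp at this
        linear_combination this
      rcases zero_char z heq with h0 | h2
      · exact Or.inl h0
      · right
        have : (z - ((Real.sqrt 2 : ℝ) : ℂ)) * (z + ((Real.sqrt 2 : ℝ) : ℂ)) = 0 := by
          linear_combination h2 - hs2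
        rcases mul_eq_zero.mp this with h' | h'
        · exact Or.inl (by linear_combination h')
        · exact Or.inr (by linear_combination h')
    · intro hcase
      rcases hcase with rfl | rfl | rfl
      · simp [f, h]
      · have hc : (starRingEnd ℂ) ((Real.sqrt 2 : ℝ) : ℂ) = ((Real.sqrt 2 : ℝ) : ℂ) :=
          Complex.conj_ofReal _
        simp only [f, h, hs2, hc]
        norm_num
      · have hc : (starRingEnd ℂ) (-((Real.sqrt 2 : ℝ) : ℂ)) = -((Real.sqrt 2 : ℝ) : ℂ) := by
          rw [map_neg, Complex.conj_ofReal]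
        have hsq : (-((Real.sqrt 2 : ℝ) : ℂ)) ^ 2 = 2 := by
          rw [show (-((Real.sqrt 2 : ℝ) : ℂ)) ^ 2 = ((Real.sqrt 2 : ℝ) : ℂ) ^ 2 from by ring, hs2]
        simp only [f, h, hc, hsq]
        norm_num
  · have : deriv h 0 = -1 := by
      rw [show h = fun z : ℂ => z / (z ^ 2 - 1) from rfl, deriv_h 0 (by norm_num)]
      norm_num
    rw [this]; simp
  · have : deriv h ((Real.sqrt 2 : ℝ) : ℂ) = -3 := by
      rw [show h = fun z : ℂ => z / (z ^ 2 - 1) from rfl,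
        deriv_h _ (by rw [hs2]; norm_num)]
      rw [hs2]; norm_num
    rw [this]; simp
  · have hsq : (-((Real.sqrt 2 : ℝ) : ℂ)) ^ 2 = 2 := by rw [neg_pow]; simp [hs2]
    have : deriv h (-((Real.sqrt 2 : ℝ) : ℂ)) = -3 := by
      rw [show h = fun z : ℂ => z / (z ^ 2 - 1) from rfl,
        deriv_h _ (by rw [hsq]; norm_num)]
      rw [hsq]; norm_num
    rw [this]; simp
end

section
/- Let f(z) = z + Σ_{k≥2} a_k z^k − conj(z) be harmonic with an isolated singular zero at the origin, and let n ≥ 2 be minimal with a_n ≠ 0. If n is even and Re(a_n) ≠ 0, then ind(f; 0) = 0. -/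
open Complex Set

private lemma circle_abs (r : ℝ) (hr : 0 < r) (t : ℝ) :
    ‖(0:ℂ) + (r:ℂ) * Complex.exp (Complex.I * t)‖ = r := by
  simp [Complex.norm_exp, Complex.mul_re, abs_of_pos hr]

private lemma windingOn_zero_of_pos (f : ℂ → ℂ) (r : ℝ) (hr : 0 < r)
    (hc : ContinuousOn f (Metric.sphere (0:ℂ) r))
    (hpos : ∀ z ∈ Metric.sphere (0:ℂ) r, (f z).im = 0 → 0 < (f z).re) :
    WindingOn f 0 r 0 := by
  set γ : ℝ → ℂ := fun t => (0:ℂ) + (r:ℂ) * Complex.exp (Complex.I * t) with hγ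
  have hγc : Continuous γ := by
    apply continuous_const.add
    exact continuous_const.mul (Complex.continuous_exp.comp (continuous_const.mul Complex.continuous_ofReal))
  have hmaps : ∀ t : ℝ, γ t ∈ Metric.sphere (0:ℂ) r := by
    intro t
    rw [mem_sphere_zero_iff_norm]
    exact circle_abs r hr t
  refine ⟨fun t => (f (γ t)).arg, ?_, ?_, ?_⟩
  · have h1 : ContinuousOn (fun t => f (γ t)) (Set.Icc 0 (2 * Real.pi)) :=
      hc.comp hγc.continuousOn (fun t _ => hmaps t)
    have h2 : ContinuousOn Complex.arg Complex.slitPlane :=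
      fun z hz => (Complex.continuousAt_arg hz).continuousWithinAt
    refine h2.comp h1 (fun t ht => ?_)
    rw [Complex.mem_slitPlane_iff]
    by_cases him : (f (γ t)).im = 0
    · exact Or.inl (hpos _ (hmaps t) him)
    · exact Or.inr him
  · intro t ht
    show f (γ t) = _
    rw [mul_comm Complex.I (((f (γ t)).arg : ℝ) : ℂ)]
    exact (Complex.norm_mul_exp_arg_mul_I _).symm
  · have hsame : γ (2 * Real.pi) = γ 0 := by
      simp only [hγ]
      congr 1
      push_cast
      rw [mul_comm Complex.I, Complex.exp_two_pi_mul_I]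
      simp
    show (f (γ (2 * Real.pi))).arg - (f (γ 0)).arg = _
    rw [hsame]
    simp

private lemma windingOn_of_neg (f : ℂ → ℂ) (z0 : ℂ) (r : ℝ) (m : ℤ)
    (h : WindingOn (fun z => -(f z)) z0 r m) : WindingOn f z0 r m := by
  obtain ⟨θ, hθc, hθ, hθd⟩ := h
  refine ⟨fun t => θ t + Real.pi, hθc.add continuousOn_const, ?_, ?_⟩
  · intro t ht
    have h1 := hθ t ht
    simp only [norm_neg] at h1 ⊢
    have h2 : Complex.exp (Complex.I * ((θ t + Real.pi : ℝ) : ℂ)) =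
        - Complex.exp (Complex.I * ((θ t : ℝ) : ℂ)) := by
      push_cast
      rw [mul_add, Complex.exp_add, mul_comm Complex.I (Real.pi : ℂ), Complex.exp_pi_mul_I]
      ring
    push_cast at h2 h1 ⊢
    rw [h2, mul_neg, ← h1]
    ring
  · show θ (2 * Real.pi) + Real.pi - (θ 0 + Real.pi) = _
    linarith [hθd]

private lemma pos_of_mul_pos_pos (α t : ℝ) (h : 0 < α * t) (hα : 0 < α) : 0 < t := by
  rcases mul_pos_iff.mp h with ⟨_, h1⟩ | ⟨h1, _⟩
  · exact h1
  · linarith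

private lemma neg_of_mul_pos_neg (α t : ℝ) (h : 0 < α * t) (hα : α < 0) : t < 0 := by
  rcases mul_pos_iff.mp h with ⟨h1, _⟩ | ⟨_, h1⟩
  · linarith
  · exact h1

private lemma ysq_bound (r u x y : ℝ) (hu0 : 0 ≤ u) (hru : 0 ≤ r - u)
    (hu2 : u^2 = x^2) (hx2 : x^2 + y^2 = r^2) : r * (r - u) ≤ y^2 := by
  nlinarith [mul_nonneg hu0 hru]

private lemma sum_pow_le (n : ℕ) (r u : ℝ) (hr : 0 ≤ r) (hu : 0 ≤ u) (hur : u ≤ r) :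
    ∑ i ∈ Finset.range n, r^i * u^(n-1-i) ≤ (n:ℝ) * r^(n-1) := by
  calc ∑ i ∈ Finset.range n, r^i * u^(n-1-i)
      ≤ ∑ i ∈ Finset.range n, r^(n-1) := by
        refine Finset.sum_le_sum (fun i hi => ?_)
        have hi' := Finset.mem_range.mp hi
        calc r^i * u^(n-1-i) ≤ r^i * r^(n-1-i) :=
              mul_le_mul_of_nonneg_left (pow_le_pow_left₀ hu hur _) (by positivity)
        _ = r^(n-1) := by rw [← pow_add]; congr 1; omega
  _ = (n:ℝ) * r^(n-1) := by
      rw [Finset.sum_const, Finset.card_range, nsmul_eq_mul]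

private lemma abs_sum_pow_le (n : ℕ) (z w : ℂ) (r : ℝ) (hz : ‖z‖ = r)
    (hw : ‖w‖ ≤ r) :
    ‖∑ i ∈ Finset.range n, z^i * w^(n-1-i)‖ ≤ (n:ℝ) * r^(n-1) := by
  have hr0 : 0 ≤ r := hz ▸ norm_nonneg z
  have h1 : ‖∑ i ∈ Finset.range n, z^i * w^(n-1-i)‖
      ≤ ∑ i ∈ Finset.range n, r^i * (‖w‖)^(n-1-i) := by
    refine le_trans ?_ (le_of_eq rfl)
    have := norm_sum_le (Finset.range n) (fun i => z^i * w^(n-1-i))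
    refine le_trans this (le_of_eq ?_)
    refine Finset.sum_congr rfl (fun i _ => ?_)
    rw [norm_mul, norm_pow, norm_pow, hz]
  refine le_trans h1 (sum_pow_le n r _ hr0 (norm_nonneg w) hw)


private lemma key_pos (n : ℕ) (hn2 : 2 ≤ n)
    (α imA B C D K r0 r s p xn y X J Tr : ℝ)
    (hαB : |α| ≤ B) (himA : |imA| ≤ B) (hα0 : 0 < |α|)
    (hB0 : 0 ≤ B) (hC0 : 0 ≤ C)
    (hD0 : 0 ≤ D)
    (hK : K = |α| * n * D^2 + |α| * n * D + B * n * D + C)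
    (hr0K : r0 * (2*(K+1)) ≤ |α|)
    (hr : 0 < r) (hrr0 : r ≤ r0)
    (hs0 : 0 < s) (hp0 : 0 < p) (hsler : s ≤ r) (hpler : p ≤ r)
    (hy : |y| ≤ D * p)
    (hJb : |J| ≤ n * s * |y|)
    (hXlow : xn - n * s * |y| ≤ X)
    (hxn : r * (p - xn) ≤ n * s * y^2)
    (hTr : |Tr| ≤ C * (p * r)) :
    0 < α * (α * X - imA * J + Tr) := by
  have hr00 : 0 < r0 := lt_of_lt_of_le hr hrr0
  have hsr0 : s ≤ r0 := le_trans hsler hrr0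
  have hnn : (0:ℝ) ≤ (n:ℝ) := Nat.cast_nonneg n
  have hK0 : 0 ≤ K := by rw [hK]; positivity
  -- basic product bounds
  have hy2 : y^2 ≤ (D*p)^2 := by nlinarith [abs_nonneg y, _root_.sq_abs y]
  have hJ2 : |J| ≤ (n:ℝ) * s * (D*p) := by
    refine le_trans hJb ?_
    exact mul_le_mul_of_nonneg_left hy (by positivity)
  have hrX : r*p - (n:ℝ)*s*(D*p)^2 - (n:ℝ)*s*(D*p)*r ≤ r * X := by
    have h1 : r * (xn - (n:ℝ)*s * |y|) ≤ r * X := mul_le_mul_of_nonneg_left hXlow hr.le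
    have h2 : (n:ℝ) * s * |y| * r ≤ (n:ℝ) * s * (D * p) * r :=
      mul_le_mul_of_nonneg_right (mul_le_mul_of_nonneg_left hy (by positivity)) hr.le
    have h3 : (n:ℝ)*s*y^2 ≤ (n:ℝ)*s*(D*p)^2 := mul_le_mul_of_nonneg_left hy2 (by positivity)
    nlinarith [h1, h2, h3, hxn]
  -- small-term bounds
  have hspp : s*(p*p) ≤ r0*(r*p) := by
    have h1 : s*p ≤ r0*r := mul_le_mul hsr0 hpler hp0.le hr00.le
    calc s*(p*p) = (s*p)*p := by ring
    _ ≤ (r0*r)*p := mul_le_mul_of_nonneg_right h1 hp0.le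
    _ = r0*(r*p) := by ring
  have hspr : s*(p*r) ≤ r0*(r*p) := by
    calc s*(p*r) = s*(p*r) := rfl
    _ ≤ r0*(p*r) := mul_le_mul_of_nonneg_right hsr0 (by positivity)
    _ = r0*(r*p) := by ring
  have hprr : (p*r)*r ≤ r0*(r*p) := by
    calc (p*r)*r ≤ (p*r)*r0 := mul_le_mul_of_nonneg_left hrr0 (by positivity)
    _ = r0*(r*p) := by ring
  -- main lower bound
  have t1 : α^2*(r*p) - (α^2*(n:ℝ)*D^2)*(s*(p*p)) - (α^2*(n:ℝ)*D)*(s*(p*r)) ≤ α^2*(r*X) := by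
    have h := mul_le_mul_of_nonneg_left hrX (sq_nonneg α)
    ring_nf at h ⊢
    linarith [h]
  have t2 : |(α*imA)*(r*J)| ≤ (|α| * B*(n:ℝ)*D)*(s*(p*r)) := by
    have h1 : |(α*imA)*(r*J)| = |α| * |imA| * (r * |J|) := by
      rw [abs_mul, abs_mul, abs_mul, abs_of_pos hr]
      try ring
    rw [h1]
    have h2 : r * |J| ≤ r*((n:ℝ)*s*(D*p)) := mul_le_mul_of_nonneg_left hJ2 hr.le
    have h3 : |α| * |imA| ≤ |α| * B := mul_le_mul_of_nonneg_left himA (abs_nonneg α)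
    calc |α| * |imA| * (r * |J|) ≤ (|α| * B)*(r*((n:ℝ)*s*(D*p))) := by
          apply mul_le_mul h3 h2 (by positivity) (by positivity)
    _ = (|α| * B*(n:ℝ)*D)*(s*(p*r)) := by ring
  have t3 : |α*r*Tr| ≤ (|α| * C)*((p*r)*r) := by
    have h1 : |α*r*Tr| = |α| * r * |Tr| := by
      rw [abs_mul, abs_mul, abs_of_pos hr]
    rw [h1]
    calc |α| * r * |Tr| ≤ |α| * r*(C*(p*r)) := by
          apply mul_le_mul_of_nonneg_left hTr (by positivity)
    _ = (|α| * C)*((p*r)*r) := by ring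
  -- combine
  have low : α^2*(r*p) - (α^2*(n:ℝ)*D^2)*(s*(p*p)) - (α^2*(n:ℝ)*D)*(s*(p*r))
      - (|α| * B*(n:ℝ)*D)*(s*(p*r)) - (|α| * C)*((p*r)*r)
      ≤ r * (α * (α * X - imA * J + Tr)) := by
    have hexp : r * (α * (α * X - imA * J + Tr))
        = α^2*(r*X) - (α*imA)*(r*J) + α*r*Tr := by ring
    rw [hexp]
    have e2 := neg_abs_le ((α*imA)*(r*J))
    have e2' := le_abs_self ((α*imA)*(r*J))
    have e3 := neg_abs_le (α*r*Tr)
    linarith [t1, t2, t3]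
  -- bound total error
  have hα2 : α^2 = |α| * |α| := by rw [← abs_mul, abs_mul_self, sq]
  have herr : (α^2*(n:ℝ)*D^2)*(s*(p*p)) + (α^2*(n:ℝ)*D)*(s*(p*r))
      + (|α| * B*(n:ℝ)*D)*(s*(p*r)) + (|α| * C)*((p*r)*r)
      ≤ (α^2*(n:ℝ)*D^2 + α^2*(n:ℝ)*D + |α| * B*(n:ℝ)*D + |α| * C)*(r0*(r*p)) := by
    have c1 : (0:ℝ) ≤ α^2*(n:ℝ)*D^2 := by positivity
    have c2 : (0:ℝ) ≤ α^2*(n:ℝ)*D := by positivity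
    have c3 : (0:ℝ) ≤ |α| * B*(n:ℝ)*D := by positivity
    have c4 : (0:ℝ) ≤ |α| * C := by positivity
    have e1 := mul_le_mul_of_nonneg_left hspp c1
    have e2 := mul_le_mul_of_nonneg_left hspr c2
    have e3 := mul_le_mul_of_nonneg_left hspr c3
    have e4 := mul_le_mul_of_nonneg_left hprr c4
    ring_nf at e1 e2 e3 e4 ⊢
    linarith [e1, e2, e3, e4]
  have hKer : (α^2*(n:ℝ)*D^2 + α^2*(n:ℝ)*D + |α| * B*(n:ℝ)*D + |α| * C) = |α| * K := by
    rw [hK]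
    linear_combination ((n:ℝ)*D^2 + (n:ℝ)*D) * hα2
  have hsmall : (|α| * K)*(r0*(r*p)) ≤ (α^2/2)*(r*p) := by
    have hrp : 0 < r*p := mul_pos hr hp0
    have h1 : |α| * (K*r0) ≤ |α| * (|α|/2) := by
      apply mul_le_mul_of_nonneg_left _ (abs_nonneg α)
      ring_nf at hr0K ⊢
      linarith [hr0K, hr00]
    calc (|α| * K)*(r0*(r*p)) = (|α| * (K*r0))*(r*p) := by ring
    _ ≤ (|α| * (|α|/2))*(r*p) := mul_le_mul_of_nonneg_right h1 hrp.le
    _ = (α^2/2)*(r*p) := by rw [hα2]; ring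
  have hfinal : 0 < r * (α * (α * X - imA * J + Tr)) := by
    have hαne : α ≠ 0 := abs_pos.mp hα0
    have hα2p : 0 < α^2 := by positivity
    have hrp : 0 < r*p := mul_pos hr hp0
    have h3 : 0 < (α^2/2)*(r*p) := by positivity
    rw [hKer] at herr
    ring_nf at low herr hsmall h3 ⊢
    linarith [low, herr, hsmall, h3]
  rcases mul_pos_iff.mp hfinal with ⟨_, h⟩ | ⟨h, _⟩
  · exact h
  · linarith


theorem index_singular_even_case (a : ℕ → ℂ) (f : ℂ → ℂ) (R : ℝ) (hR : 0 < R)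
    (ha0 : a 0 = 0) (ha1 : a 1 = 1)
    (hsum : ∀ z : ℂ, ‖z‖ < R →
      HasSum (fun k : ℕ => a k * z ^ k) (f z + (starRingEnd ℂ) z))
    (hiso : ∀ᶠ z in nhdsWithin 0 {(0 : ℂ)}ᶜ, f z ≠ 0)
    (n : ℕ) (hn2 : 2 ≤ n) (han : a n ≠ 0)
    (hmin : ∀ m : ℕ, 2 ≤ m → m < n → a m = 0)
    (hnev : Even n) (hre : (a n).re ≠ 0) :
    HasIndex f 0 0 := by
  -- coefficient bound
  have hR2 : (0:ℝ) < R / 2 := by linarith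
  have hz1abs : ‖((R/2 : ℝ) : ℂ)‖ < R := by
    rw [Complex.norm_real, Real.norm_eq_abs, abs_of_pos hR2]; linarith
  obtain ⟨M, hM⟩ : ∃ M : ℝ, ∀ k, ‖a k‖ * (R/2)^k ≤ M := by
    obtain ⟨M, hM⟩ := (hsum _ hz1abs).summable.tendsto_atTop_zero.norm.bddAbove_range
    refine ⟨M, fun k => ?_⟩
    have h1 := hM (Set.mem_range_self k)
    simpa [norm_mul, norm_pow, Complex.norm_real, Real.norm_eq_abs,
      abs_of_pos hR2, abs_of_pos hR] using h1
  have hM0 : 0 ≤ M := le_trans (by positivity) (hM 0)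
  have hcoef : ∀ k, ‖a k‖ ≤ M * (2/R)^k := by
    intro k
    have h1 : ((R:ℝ)/2)^k * (2/R)^k = 1 := by
      rw [← mul_pow]; field_simp; exact one_pow k
    have h2 : (0:ℝ) ≤ (2/R)^k := by positivity
    calc ‖a k‖ = ‖a k‖ * (((R:ℝ)/2)^k * (2/R)^k) := by rw [h1, mul_one]
    _ = ‖a k‖ * ((R:ℝ)/2)^k * (2/R)^k := by ring
    _ ≤ M * (2/R)^k := mul_le_mul_of_nonneg_right (hM k) h2
  -- tail
  obtain ⟨T, hT⟩ : ∃ T : ℂ → ℂ,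
      T = fun z => ∑' k : ℕ, a (k + (n+1)) * z ^ (k + (n+1)) := ⟨_, rfl⟩
  obtain ⟨C, hCdef⟩ : ∃ C : ℝ, C = 2 * M * (2/R)^(n+1) := ⟨_, rfl⟩
  have hC0 : 0 ≤ C := by rw [hCdef]; positivity
  have htail : ∀ z : ℂ, ‖z‖ ≤ R/4 → ‖T z‖ ≤ C * ‖z‖ ^ (n+1) := by
    intro z hz
    obtain ⟨q, hq⟩ : ∃ q : ℝ, q = 2 * ‖z‖ / R := ⟨_, rfl⟩
    have hq0 : 0 ≤ q := by rw [hq]; positivity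
    have hq2 : q ≤ 1/2 := by
      rw [hq, div_le_iff₀ hR]
      nlinarith [hz]
    have hterm : ∀ k : ℕ, ‖a (k + (n+1)) * z ^ (k + (n+1))‖ ≤ (M * q^(n+1)) * q^k := by
      intro k
      have h1 : ‖a (k + (n+1)) * z ^ (k + (n+1))‖
          = ‖a (k + (n+1))‖ * ‖z‖ ^ (k + (n+1)) := by
        simp [norm_mul, norm_pow]
      rw [h1]
      have h2 := hcoef (k + (n+1))
      have habs : (0:ℝ) ≤ ‖z‖ ^ (k + (n+1)) := by positivity
      have h3 : ‖a (k + (n+1))‖ * ‖z‖ ^ (k + (n+1))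
          ≤ M * (2/R)^(k + (n+1)) * ‖z‖ ^ (k + (n+1)) :=
        mul_le_mul_of_nonneg_right h2 habs
      refine le_trans h3 (le_of_eq ?_)
      have hq' : ∀ j : ℕ, (2/R)^j * ‖z‖ ^ j = q^j := by
        intro j
        rw [← mul_pow, hq]
        congr 1
        ring
      rw [mul_assoc, hq' (k + (n+1)), pow_add]
      ring
    have hgeo : HasSum (fun k : ℕ => (M * q^(n+1)) * q^k) ((M * q^(n+1)) * (1-q)⁻¹) :=
      (hasSum_geometric_of_lt_one hq0 (by linarith)).mul_left _
    have h4 : ‖T z‖ ≤ M * q^(n+1) * (1-q)⁻¹ := by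
      rw [hT]
      exact tsum_of_norm_bounded hgeo hterm
    refine le_trans h4 ?_
    have h5 : (1 - q)⁻¹ ≤ 2 := by
      rw [inv_le_comm₀ (by linarith) (by norm_num)]
      linarith
    have h6 : q ^ (n+1) = (2/R)^(n+1) * ‖z‖ ^ (n+1) := by
      rw [← mul_pow, hq]; congr 1; ring
    have h7 : 0 ≤ M * q^(n+1) := by positivity
    calc M * q^(n+1) * (1-q)⁻¹ ≤ M * q^(n+1) * 2 := mul_le_mul_of_nonneg_left h5 h7
    _ = C * ‖z‖ ^ (n+1) := by rw [h6, hCdef]; ring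
  -- decomposition
  have hsplit : ∀ z : ℂ, ‖z‖ < R →
      f z = z - (starRingEnd ℂ) z + a n * z^n + T z := by
    intro z hz
    have h1 := hsum z hz
    have h2 := Summable.sum_add_tsum_nat_add (f := fun k : ℕ => a k * z ^ k) (n+1) h1.summable
    rw [h1.tsum_eq] at h2
    have hfin : ∑ k ∈ Finset.range (n+1), a k * z ^ k = z + a n * z^n := by
      rw [Finset.sum_range_succ]
      have h3 : ∑ k ∈ Finset.range n, a k * z ^ k = z := by
        rw [Finset.sum_eq_single 1]
        · rw [ha1, pow_one, one_mul]
        · intro b hb hb1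
          rcases Nat.lt_or_ge b 2 with hlt | hge
          · interval_cases b
            · rw [ha0, zero_mul]
            · exact absurd rfl hb1
          · rw [hmin b hge (Finset.mem_range.mp hb), zero_mul]
        · intro hmem
          exact absurd (Finset.mem_range.mpr (by omega)) hmem
      rw [h3]
    rw [hfin] at h2
    have h4 : z + a n * z ^ n + T z = f z + (starRingEnd ℂ) z := by rw [hT]; exact h2
    have h5 : f z = z + a n * z ^ n + T z - (starRingEnd ℂ) z := by rw [h4]; ring
    rw [h5]; ring
  -- continuity
  have hfc : ContinuousOn f (Metric.closedBall (0:ℂ) (R/4)) := by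
    have hsub : Metric.closedBall (0:ℂ) (R/4) ⊆ {z : ℂ | ‖z‖ < R} := by
      intro z hz
      rw [Metric.mem_closedBall, dist_zero_right] at hz
      simp only [Set.mem_setOf_eq]
      linarith
    have hts : ContinuousOn (fun z : ℂ => ∑' k : ℕ, a k * z ^ k)
        (Metric.closedBall (0:ℂ) (R/4)) := by
      refine continuousOn_tsum (fun k => ?_) (Summable.mul_left M
        (summable_geometric_of_lt_one (by norm_num) (by norm_num : (1/2:ℝ) < 1))) ?_
      · exact (continuous_const.mul (continuous_pow k)).continuousOn
      · intro k z hz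
        rw [Metric.mem_closedBall, dist_zero_right] at hz
        have h1 : ‖a k * z ^ k‖ = ‖a k‖ * ‖z‖ ^ k := by
          simp [norm_mul, norm_pow]
        rw [h1]
        have h2 : ‖a k‖ * ‖z‖ ^ k ≤ (M * (2/R)^k) * (R/4)^k :=
          mul_le_mul (hcoef k) (pow_le_pow_left₀ (by positivity) hz k)
            (by positivity) (by positivity)
        refine le_trans h2 (le_of_eq ?_)
        rw [mul_assoc, ← mul_pow]
        congr 2
        field_simp; ring
    have heq : Set.EqOn f (fun z : ℂ => (∑' k : ℕ, a k * z ^ k) - (starRingEnd ℂ) z)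
        (Metric.closedBall (0:ℂ) (R/4)) := by
      intro z hz
      have h1 := (hsum z (hsub hz)).tsum_eq
      simp only
      rw [h1]; ring
    exact ContinuousOn.congr (hts.sub (Complex.continuous_conj.continuousOn)) heq
  -- constants
  obtain ⟨α, hα⟩ : ∃ v : ℝ, v = (a n).re := ⟨_, rfl⟩
  obtain ⟨B, hB⟩ : ∃ v : ℝ, v = ‖a n‖ := ⟨_, rfl⟩
  have hB0 : 0 ≤ B := by rw [hB]; positivity
  obtain ⟨D, hD⟩ : ∃ v : ℝ, v = (B + C) / 2 := ⟨_, rfl⟩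
  have hD0 : 0 ≤ D := by rw [hD]; positivity
  obtain ⟨K, hK⟩ : ∃ v : ℝ, v = |α| * n * D^2 + |α| * n * D + B * n * D + C := ⟨_, rfl⟩
  have hK0 : 0 ≤ K := by rw [hK]; positivity
  have hα0 : 0 < |α| := by rw [hα]; exact abs_pos.mpr hre
  obtain ⟨r0, hr0⟩ : ∃ v : ℝ, v = min (min 1 (R/4)) (|α| / (2*(K+1))) := ⟨_, rfl⟩
  have hr00 : 0 < r0 := by
    rw [hr0]
    exact lt_min (lt_min one_pos (by linarith)) (by positivity)
  have hr01 : r0 ≤ 1 := by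
    rw [hr0]; exact le_trans (min_le_left _ _) (min_le_left _ _)
  have hr0R : r0 ≤ R/4 := by
    rw [hr0]; exact le_trans (min_le_left _ _) (min_le_right _ _)
  have hr0K : r0 * (2*(K+1)) ≤ |α| := by
    have h1 : r0 ≤ |α| / (2*(K+1)) := by rw [hr0]; exact min_le_right _ _
    calc r0 * (2*(K+1)) ≤ (|α| / (2*(K+1))) * (2*(K+1)) :=
          mul_le_mul_of_nonneg_right h1 (by positivity)
    _ = |α| := by field_simp
  -- main pointwise claim
  have hclaim : ∀ r : ℝ, 0 < r → r < r0 → ∀ z : ℂ, ‖z‖ = r →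
      (f z).im = 0 → 0 < α * (f z).re := by
    intro r hr hrr0 z hzr hzim
    have hr1 : r ≤ 1 := le_trans hrr0.le hr01
    have hrR4 : r ≤ R/4 := le_trans hrr0.le hr0R
    have hrlt : ‖z‖ < R := by rw [hzr]; linarith
    have hdec := hsplit z hrlt
    obtain ⟨x, hxd⟩ : ∃ v : ℝ, v = z.re := ⟨_, rfl⟩
    obtain ⟨y, hyd⟩ : ∃ v : ℝ, v = z.im := ⟨_, rfl⟩
    have hx2 : x^2 + y^2 = r^2 := by
      have h1 := Complex.sq_norm z
      rw [hzr, Complex.normSq_apply] at h1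
      rw [hxd, hyd]
      linear_combination -h1
    have him : 2*y + ((a n * z^n).im + (T z).im) = 0 := by
      rw [hdec] at hzim
      simp only [Complex.add_im, Complex.sub_im, Complex.conj_im] at hzim
      rw [hyd]
      linear_combination hzim
    have hreq : (f z).re = (a n * z^n).re + (T z).re := by
      rw [hdec]
      simp [Complex.add_re, Complex.sub_re, Complex.conj_re]
    have hTb : ‖T z‖ ≤ C * r^(n+1) := by
      have h1 := htail z (by rw [hzr]; exact hrR4)
      rwa [hzr] at h1
    have hanb : ‖a n * z^n‖ = B * r^n := by
      rw [norm_mul, norm_pow, hzr, hB]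
    obtain ⟨s, hs⟩ : ∃ v : ℝ, v = r^(n-1) := ⟨_, rfl⟩
    obtain ⟨p, hp⟩ : ∃ v : ℝ, v = r^n := ⟨_, rfl⟩
    have hpn1' : r^(n+1) = p * r := by rw [hp, pow_succ]
    have hs0 : 0 < s := by rw [hs]; exact pow_pos hr _
    have hp0 : 0 < p := by rw [hp]; exact pow_pos hr _
    have hsler : s ≤ r := by rw [hs]; exact pow_le_of_le_one hr.le hr1 (by omega)
    have hpler : p ≤ r := by rw [hp]; exact pow_le_of_le_one hr.le hr1 (by omega)
    -- bound on y
    have him1 : |(a n * z^n).im| ≤ B * p := by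
      rw [hp]
      exact le_trans (Complex.abs_im_le_norm _) (le_of_eq hanb)
    have him2 : |(T z).im| ≤ C * (p * r) := by
      refine le_trans (Complex.abs_im_le_norm _) ?_
      rw [← hpn1']
      exact hTb
    have hy : |y| ≤ D * p := by
      have h1 : |2*y| ≤ B*p + C*(p*r) := by
        have h2 : 2*y = -((a n * z^n).im + (T z).im) := by linarith
        rw [h2, abs_neg]
        exact le_trans (abs_add_le _ _) (add_le_add him1 him2)
      rw [abs_mul, _root_.abs_two] at h1
      have h3 : C*(p*r) ≤ C*p := by
        have h4 := mul_le_mul_of_nonneg_left hr1 (mul_nonneg hC0 hp0.le)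
        ring_nf at h4 ⊢
        linarith
      rw [hD]
      ring_nf
      ring_nf at h1
      linarith
    -- geometric sum bound (complex)
    have hxler : |x| ≤ r := by rw [hxd, ← hzr]; exact Complex.abs_re_le_norm z
    have hzsub : ‖z - (x:ℂ)‖ = |y| := by
      have h1 : z - (x:ℂ) = (y:ℂ) * Complex.I := by
        apply Complex.ext <;> simp [hxd, hyd]
      rw [h1, norm_mul, Complex.norm_I, Complex.norm_real, Real.norm_eq_abs, mul_one]
    have hgeom : ‖z^n - (x:ℂ)^n‖ ≤ (n : ℝ) * s * |y| := by
      have hid := geom_sum₂_mul z (x:ℂ) n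
      rw [← hid, norm_mul, hzsub]
      have hsum_b : ‖∑ i ∈ Finset.range n, z^i * (x:ℂ)^(n-1-i)‖ ≤ (n:ℝ) * s := by
        rw [hs]
        exact abs_sum_pow_le n z (x:ℂ) r hzr (by rw [Complex.norm_real, Real.norm_eq_abs]; exact hxler)
      exact mul_le_mul_of_nonneg_right hsum_b (abs_nonneg y)
    have hxnc : ((x:ℂ))^n = ((x^n : ℝ) : ℂ) := by push_cast; ring
    have hJb : |(z^n).im| ≤ (n:ℝ) * s * |y| := by
      have h1 : (z^n).im = (z^n - (x:ℂ)^n).im := by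
        rw [Complex.sub_im, hxnc, Complex.ofReal_im]
        ring
      rw [h1]
      exact le_trans (Complex.abs_im_le_norm _) hgeom
    have hXlow : x^n - (n:ℝ)*s*|y| ≤ (z^n).re := by
      have h1 : (z^n).re = x^n + (z^n - (x:ℂ)^n).re := by
        rw [Complex.sub_re, hxnc, Complex.ofReal_re]
        ring
      have h2 : |(z^n - (x:ℂ)^n).re| ≤ (n:ℝ)*s*|y| :=
        le_trans (Complex.abs_re_le_norm _) hgeom
      rw [h1]
      linarith [abs_le.mp h2]
    -- lower bound for x^n (real geometric)
    have hxn : r * (p - x^n) ≤ (n:ℝ) * s * y^2 := by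
      obtain ⟨u, hu⟩ : ∃ v : ℝ, v = |x| := ⟨_, rfl⟩
      have hu0 : 0 ≤ u := by rw [hu]; exact abs_nonneg x
      have hur : u ≤ r := by rw [hu]; exact hxler
      have hxu : x^n = u^n := by rw [hu, hnev.pow_abs x]
      have hid := geom_sum₂_mul r u n
      have hsumb : ∑ i ∈ Finset.range n, r^i * u^(n-1-i) ≤ (n:ℝ) * s := by
        rw [hs]
        exact sum_pow_le n r u hr.le hu0 hur
      have hsum0 : (0:ℝ) ≤ ∑ i ∈ Finset.range n, r^i * u^(n-1-i) :=
        Finset.sum_nonneg (fun i _ => mul_nonneg (pow_nonneg hr.le _) (pow_nonneg hu0 _))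
      have hru : 0 ≤ r - u := by linarith
      have hu2 : u^2 = x^2 := by rw [hu]; exact _root_.sq_abs x
      have hy2 : r * (r - u) ≤ y^2 := ysq_bound r u x y hu0 hru hu2 hx2
      have h3 : p - x^n = (∑ i ∈ Finset.range n, r^i * u^(n-1-i)) * (r - u) := by
        rw [hp, hxu]
        exact hid.symm
      rw [h3]
      calc r * ((∑ i ∈ Finset.range n, r^i * u^(n-1-i)) * (r - u))
          = (∑ i ∈ Finset.range n, r^i * u^(n-1-i)) * (r * (r - u)) := by ring
      _ ≤ (∑ i ∈ Finset.range n, r^i * u^(n-1-i)) * y^2 :=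
            mul_le_mul_of_nonneg_left hy2 hsum0
      _ ≤ ((n:ℝ) * s) * y^2 := mul_le_mul_of_nonneg_right hsumb (sq_nonneg y)
      _ = (n:ℝ) * s * y^2 := by ring
    have hTrb : |(T z).re| ≤ C * (p * r) := by
      refine le_trans (Complex.abs_re_le_norm _) ?_
      rw [← hpn1']
      exact hTb
    have hαB : |α| ≤ B := by rw [hα, hB]; exact Complex.abs_re_le_norm (a n)
    have himA : |(a n).im| ≤ B := by rw [hB]; exact Complex.abs_im_le_norm (a n)
    have hEre : α * (f z).re = α * (α * (z^n).re - (a n).im * (z^n).im + (T z).re) := by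
      rw [hreq, hα, Complex.mul_re]
    rw [hEre]
    exact key_pos n hn2 α ((a n).im) B C D K r0 r s p (x^n) y ((z^n).re) ((z^n).im) ((T z).re)
      hαB himA hα0 hB0 hC0 hD0 hK hr0K hr hrr0.le hs0 hp0 hsler hpler hy hJb hXlow hxn hTrb
  refine ⟨r0, hr00, ?_⟩
  intro r hr hrr0
  have hsub2 : Metric.sphere (0:ℂ) r ⊆ Metric.closedBall (0:ℂ) (R/4) := by
    intro w hw
    rw [mem_sphere_zero_iff_norm] at hw
    rw [mem_closedBall_zero_iff, hw]
    linarith [le_trans hrr0.le hr0R]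
  have habs : ∀ w : ℂ, w ∈ Metric.sphere (0:ℂ) r → ‖w‖ = r := by
    intro w hw
    rw [mem_sphere_zero_iff_norm] at hw
    exact hw
  rcases hre.lt_or_gt with hneg | hpos
  · apply windingOn_of_neg
    apply windingOn_zero_of_pos _ r hr ((hfc.mono hsub2).neg)
    intro w hw him0
    have h1 : (f w).im = 0 := by simpa using him0
    have h2 := hclaim r hr hrr0 w (habs w hw) h1
    rw [hα] at h2
    simp only [Pi.neg_apply, Complex.neg_re]
    have h3 := neg_of_mul_pos_neg _ _ h2 hneg
    linarith
  · apply windingOn_zero_of_pos f r hr (hfc.mono hsub2)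
    intro w hw him0
    have h2 := hclaim r hr hrr0 w (habs w hw) him0
    rw [hα] at h2
    exact pos_of_mul_pos_pos _ _ h2 hpos
end

section
/- Let f(z) = z + Σ_{k≥2} a_k z^k − conj(z) be harmonic with an isolated singular zero at the origin, and let n ≥ 2 be minimal with a_n ≠ 0. If n is odd and Re(a_n) > 0, then ind(f; 0) = +1; if n is odd and Re(a_n) < 0, then ind(f; 0) = −1. -/
open Complex Set

lemma pow_sub_pow_abs_le (x y : ℂ) (M : ℝ) (p : ℕ) (hx : ‖x‖ ≤ M)
    (hy : ‖y‖ ≤ M) :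
    ‖x ^ p - y ^ p‖ ≤ p * M ^ (p - 1) * ‖x - y‖ := by
  have hM : 0 ≤ M := le_trans (norm_nonneg x) hx
  rw [← geom_sum₂_mul x y p, norm_mul]
  gcongr
  calc ‖∑ i ∈ Finset.range p, x ^ i * y ^ (p - 1 - i)‖
      ≤ ∑ i ∈ Finset.range p, ‖x ^ i * y ^ (p - 1 - i)‖ := by
        exact norm_sum_le _ _
    _ ≤ ∑ i ∈ Finset.range p, M ^ (p - 1) := by
        apply Finset.sum_le_sum
        intro i hi
        rw [Finset.mem_range] at hi
        have hsplit : i + (p - 1 - i) = p - 1 := by omega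
        calc ‖x ^ i * y ^ (p - 1 - i)‖ = ‖x‖ ^ i * ‖y‖ ^ (p - 1 - i) := by
              rw [norm_mul, norm_pow, norm_pow]
          _ ≤ M ^ i * M ^ (p - 1 - i) := by gcongr <;> first | exact hx | exact hy
          _ = M ^ (p - 1) := by rw [← pow_add, hsplit]
    _ = p * M ^ (p - 1) := by rw [Finset.sum_const, Finset.card_range, nsmul_eq_mul]

lemma abs_pow_sub_abs_pow (z : ℂ) (p : ℕ) (hp : 1 ≤ p) :
    ‖z ^ (2 * p) - ((‖z‖ ^ (2 * p) : ℝ) : ℂ)‖ ≤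
      2 * p * ‖z‖ ^ (2 * p - 1) * |z.im| := by
  have h1 : ((‖z‖ ^ (2 * p) : ℝ) : ℂ) = z ^ p * (starRingEnd ℂ z) ^ p := by
    rw [← mul_pow, Complex.mul_conj, ← Complex.sq_norm]
    push_cast
    ring
  have h2 : z ^ (2 * p) = z ^ p * z ^ p := by rw [two_mul, pow_add]
  rw [h1, h2, ← mul_sub, norm_mul, norm_pow]
  have h3 := pow_sub_pow_abs_le z (starRingEnd ℂ z) (‖z‖) p le_rfl
    (by rw [Complex.norm_conj])
  have h4 : ‖z - starRingEnd ℂ z‖ = 2 * |z.im| := by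
    rw [Complex.sub_conj]
    rw [norm_mul, Complex.norm_I, Complex.norm_real, Real.norm_eq_abs, mul_one, abs_mul]
    norm_num
  calc ‖z‖ ^ p * ‖z ^ p - starRingEnd ℂ z ^ p‖
      ≤ ‖z‖ ^ p * (p * ‖z‖ ^ (p - 1) * (2 * |z.im|)) := by
        rw [← h4]; gcongr
    _ = 2 * p * (‖z‖ ^ p * ‖z‖ ^ (p - 1)) * |z.im| := by ring
    _ = 2 * p * ‖z‖ ^ (2 * p - 1) * |z.im| := by
        rw [← pow_add]
        have hsplit : p + (p - 1) = 2 * p - 1 := by omega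
        rw [hsplit]


lemma circle_ne_zero {r : ℝ} (hr : 0 < r) (t : ℝ) :
    ((r : ℂ) * Complex.exp (Complex.I * t)) ≠ 0 := by
  apply mul_ne_zero
  · exact_mod_cast hr.ne'
  · exact Complex.exp_ne_zero _

lemma abs_circle {r : ℝ} (hr : 0 < r) (t : ℝ) :
    ‖(r : ℂ) * Complex.exp (Complex.I * t)‖ = r := by
  rw [norm_mul, Complex.norm_real, Complex.norm_exp]
  simp [abs_of_pos hr]

lemma winding_of_re_pos (f : ℂ → ℂ) (r : ℝ) (hr : 0 < r)
    (hcont : Continuous (fun t : ℝ => f ((r : ℂ) * Complex.exp (Complex.I * t))))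
    (hpos : ∀ t : ℝ,
      0 < (f ((r : ℂ) * Complex.exp (Complex.I * t)) /
          ((r : ℂ) * Complex.exp (Complex.I * t))).re) :
    WindingOn f 0 r 1 := by
  set z : ℝ → ℂ := fun t => (r : ℂ) * Complex.exp (Complex.I * t) with hz
  set w : ℝ → ℂ := fun t => f (z t) / z t with hw
  have hzne : ∀ t, z t ≠ 0 := circle_ne_zero hr
  have hwcont : Continuous w := hcont.div (by continuity) hzne
  refine ⟨fun t => t + (w t).arg, ?_, ?_, ?_⟩
  · apply Continuous.continuousOn
    apply continuous_id.add
    rw [continuous_iff_continuousAt]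
    intro t
    have h1 : ContinuousAt Complex.arg (w t) :=
      Complex.continuousAt_arg (Complex.mem_slitPlane_iff.2 (Or.inl (hpos t)))
    exact h1.comp hwcont.continuousAt
  · intro t _
    have hfz : f (0 + (r : ℂ) * Complex.exp (Complex.I * t)) = z t * w t := by
      rw [zero_add]
      exact (mul_div_cancel₀ _ (hzne t)).symm
    rw [hfz]
    have habs : ‖z t * w t‖ = r * ‖w t‖ := by
      rw [norm_mul, abs_circle hr]
    rw [habs]
    have harg : (‖w t‖ : ℂ) * Complex.exp (Complex.I * (w t).arg) = w t := by
      rw [mul_comm Complex.I]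
      exact Complex.norm_mul_exp_arg_mul_I (w t)
    have hsplit : Complex.exp (Complex.I * ((t + (w t).arg : ℝ) : ℂ)) =
        Complex.exp (Complex.I * t) * Complex.exp (Complex.I * (w t).arg) := by
      rw [← Complex.exp_add]
      congr 1
      push_cast
      ring
    rw [hsplit]
    conv_lhs => rw [← harg]
    push_cast
    ring
  · have hweq : w (2 * Real.pi) = w 0 := by
      have : z (2 * Real.pi) = z 0 := by
        simp only [hz]
        congr 1
        push_cast
        rw [mul_comm Complex.I]
        rw [Complex.exp_two_pi_mul_I]
        simp [Complex.exp_zero]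
      simp only [hw, this]
    show (2 * Real.pi + (w (2 * Real.pi)).arg) - (0 + (w 0).arg) = 2 * Real.pi * ((1 : ℤ) : ℝ)
    rw [hweq]
    push_cast
    ring

lemma winding_of_re_neg (f : ℂ → ℂ) (r : ℝ) (hr : 0 < r)
    (hcont : Continuous (fun t : ℝ => f ((r : ℂ) * Complex.exp (Complex.I * t))))
    (hneg : ∀ t : ℝ,
      (f ((r : ℂ) * Complex.exp (Complex.I * t)) /
          (starRingEnd ℂ) ((r : ℂ) * Complex.exp (Complex.I * t))).re < 0) :
    WindingOn f 0 r (-1) := by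
  set z : ℝ → ℂ := fun t => (r : ℂ) * Complex.exp (Complex.I * t) with hz
  set u : ℝ → ℂ := fun t => -(f (z t) / (starRingEnd ℂ) (z t)) with hu
  have hzne : ∀ t, z t ≠ 0 := circle_ne_zero hr
  have hzcne : ∀ t, (starRingEnd ℂ) (z t) ≠ 0 := by
    intro t
    simpa using hzne t
  have hucont : Continuous u := by
    apply Continuous.neg
    exact hcont.div (Complex.continuous_conj.comp (by continuity)) hzcne
  have hupos : ∀ t, 0 < (u t).re := by
    intro t
    have := hneg t
    simp only [hu, Complex.neg_re]
    linarith
  have hconjz : ∀ t, (starRingEnd ℂ) (z t) = (r : ℂ) * Complex.exp (-(Complex.I * t)) := by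
    intro t
    simp only [hz]
    rw [map_mul, ← Complex.exp_conj]
    congr 1
    · simp
    · simp [map_mul]
  refine ⟨fun t => Real.pi - t + (u t).arg, ?_, ?_, ?_⟩
  · apply Continuous.continuousOn
    apply Continuous.add (by continuity)
    rw [continuous_iff_continuousAt]
    intro t
    have h1 : ContinuousAt Complex.arg (u t) :=
      Complex.continuousAt_arg (Complex.mem_slitPlane_iff.2 (Or.inl (hupos t)))
    exact h1.comp hucont.continuousAt
  · intro t _
    have hfz : f (0 + (r : ℂ) * Complex.exp (Complex.I * t)) = -((starRingEnd ℂ) (z t) * u t) := by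
      rw [zero_add]
      show f (z t) = _
      simp only [hu]
      rw [mul_neg, neg_neg, mul_div_cancel₀ _ (hzcne t)]
    rw [hfz]
    have habs : ‖-((starRingEnd ℂ) (z t) * u t)‖ = r * ‖u t‖ := by
      rw [norm_neg, norm_mul, Complex.norm_conj, abs_circle hr]
    rw [habs]
    have harg : (‖u t‖ : ℂ) * Complex.exp (Complex.I * (u t).arg) = u t := by
      rw [mul_comm Complex.I]
      exact Complex.norm_mul_exp_arg_mul_I (u t)
    have hsplit : Complex.exp (Complex.I * ((Real.pi - t + (u t).arg : ℝ) : ℂ)) =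
        Complex.exp ((Real.pi : ℂ) * Complex.I) * Complex.exp (-(Complex.I * t)) *
          Complex.exp (Complex.I * (u t).arg) := by
      rw [← Complex.exp_add, ← Complex.exp_add]
      congr 1
      push_cast
      ring
    rw [hsplit, Complex.exp_pi_mul_I, hconjz]
    conv_lhs => rw [← harg]
    push_cast
    ring
  · have hueq : u (2 * Real.pi) = u 0 := by
      have hzz : z (2 * Real.pi) = z 0 := by
        simp only [hz]
        congr 1
        push_cast
        rw [mul_comm Complex.I]
        rw [Complex.exp_two_pi_mul_I]
        simp [Complex.exp_zero]
      simp only [hu, hzz]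
    show (Real.pi - 2 * Real.pi + (u (2 * Real.pi)).arg) - (Real.pi - 0 + (u 0).arg) =
      2 * Real.pi * ((-1 : ℤ) : ℝ)
    rw [hueq]
    push_cast
    ring

set_option maxHeartbeats 1000000 in
lemma est_pos (b : ℂ) (hb : 0 < b.re) (n : ℕ) (hn : 2 ≤ n) (hodd : Odd n)
    (C ρ : ℝ) (hC : 0 < C) (hρ : 0 < ρ) (g : ℂ → ℂ)
    (hE : ∀ z : ℂ, ‖z‖ ≤ ρ →
      ‖g z + (starRingEnd ℂ) z - z - b * z ^ n‖ ≤ C * ‖z‖ ^ (n + 1)) :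
    ∃ r1 > 0, ∀ z : ℂ, 0 < ‖z‖ → ‖z‖ ≤ r1 →
      0 < (g z * (starRingEnd ℂ) z).re := by
  obtain ⟨p, hp⟩ := hodd
  have hp1 : 1 ≤ p := by omega
  obtain ⟨K, hK⟩ : ∃ K : ℝ, K = (‖b‖) ^ 2 * ((n : ℝ) - 1) ^ 2 / 8 + C := ⟨_, rfl⟩
  have hK0 : 0 < K := by rw [hK]; positivity
  refine ⟨min (min 1 ρ) (b.re / (2 * K)),
    lt_min (lt_min one_pos hρ) (div_pos hb (by linarith)), ?_⟩
  intro z hz0 hz1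
  set r := ‖z‖ with hr
  set y := z.im with hy
  have hr1 : r ≤ 1 := le_trans hz1 (le_trans (min_le_left _ _) (min_le_left _ _))
  have hrρ : r ≤ ρ := le_trans hz1 (le_trans (min_le_left _ _) (min_le_right _ _))
  have hrK : r ≤ b.re / (2 * K) := le_trans hz1 (min_le_right _ _)
  -- decomposition
  have hzn : z ^ (n - 1) * z = z ^ n := by
    rw [← pow_succ]
    congr 1
    omega
  have hdecomp : g z * (starRingEnd ℂ) z =
      (z - (starRingEnd ℂ) z) * (starRingEnd ℂ) z +
      b * z ^ (n - 1) * (z * (starRingEnd ℂ) z) +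
      (g z + (starRingEnd ℂ) z - z - b * z ^ n) * (starRingEnd ℂ) z := by
    rw [← hzn]; ring
  have h2y : ((z - (starRingEnd ℂ) z) * (starRingEnd ℂ) z).re = 2 * y ^ 2 := by
    rw [Complex.sub_conj]
    simp [Complex.mul_re, Complex.mul_im, Complex.conj_re, Complex.conj_im]
    ring
  have hmulc : (b * z ^ (n - 1) * (z * (starRingEnd ℂ) z)).re =
      Complex.normSq z * (b * z ^ (n - 1)).re := by
    rw [Complex.mul_conj]
    simp [Complex.mul_re, Complex.ofReal_re, Complex.ofReal_im]
    ring
  -- the power bound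
  have hpowb : ‖z ^ (n - 1) - ((r ^ (n - 1) : ℝ) : ℂ)‖ ≤
      ((n : ℝ) - 1) * r ^ (n - 2) * |y| := by
    have hbd := abs_pow_sub_abs_pow z p hp1
    have e2 : 2 * p - 1 = n - 2 := by omega
    have e1 : 2 * p = n - 1 := by omega
    rw [e2, e1] at hbd
    refine le_trans hbd ?_
    have hcast : (2 : ℝ) * (p : ℝ) = (n : ℝ) - 1 := by
      have : (n : ℝ) = 2 * (p : ℝ) + 1 := by exact_mod_cast congrArg (Nat.cast : ℕ → ℝ) hp
      linarith
    rw [← hcast]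
  have hbre : b.re * r ^ (n - 1) - ‖b‖ * (((n : ℝ) - 1) * r ^ (n - 2) * |y|) ≤
      (b * z ^ (n - 1)).re := by
    have hsplit : b * z ^ (n - 1) =
        b * ((r ^ (n - 1) : ℝ) : ℂ) + b * (z ^ (n - 1) - ((r ^ (n - 1) : ℝ) : ℂ)) := by ring
    rw [hsplit, Complex.add_re]
    have h1 : (b * ((r ^ (n - 1) : ℝ) : ℂ)).re = b.re * r ^ (n - 1) := by
      simp [Complex.mul_re, Complex.ofReal_re, Complex.ofReal_im, ← Complex.ofReal_pow]
    rw [h1]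
    have h2 : -(‖b‖ * (((n : ℝ) - 1) * r ^ (n - 2) * |y|)) ≤
        (b * (z ^ (n - 1) - ((r ^ (n - 1) : ℝ) : ℂ))).re := by
      have habs2 : |(b * (z ^ (n - 1) - ((r ^ (n - 1) : ℝ) : ℂ))).re| ≤
          ‖b‖ * (((n : ℝ) - 1) * r ^ (n - 2) * |y|) := by
        refine le_trans (Complex.abs_re_le_norm _) ?_
        rw [norm_mul]
        exact mul_le_mul_of_nonneg_left hpowb (norm_nonneg b)
      linarith [(abs_le.1 habs2).1]
    linarith
  -- error term bound
  have hEre : -(C * r ^ (n + 2)) ≤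
      ((g z + (starRingEnd ℂ) z - z - b * z ^ n) * (starRingEnd ℂ) z).re := by
    have habs2 : |((g z + (starRingEnd ℂ) z - z - b * z ^ n) * (starRingEnd ℂ) z).re| ≤
        C * r ^ (n + 2) := by
      refine le_trans (Complex.abs_re_le_norm _) ?_
      rw [norm_mul, Complex.norm_conj]
      calc ‖g z + (starRingEnd ℂ) z - z - b * z ^ n‖ * ‖z‖
          ≤ (C * r ^ (n + 1)) * r := by
            apply mul_le_mul (hE z hrρ) le_rfl (norm_nonneg z)
            positivity
        _ = C * r ^ (n + 2) := by rw [mul_assoc, ← pow_succ]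
    linarith [(abs_le.1 habs2).1]
  -- put everything together
  have hnormSq : Complex.normSq z = r ^ 2 := (Complex.sq_norm z).symm
  have hP : 2 * y ^ 2 + r ^ 2 * (b.re * r ^ (n - 1) -
        ‖b‖ * (((n : ℝ) - 1) * r ^ (n - 2) * |y|)) - C * r ^ (n + 2) ≤
      (g z * (starRingEnd ℂ) z).re := by
    rw [hdecomp, Complex.add_re, Complex.add_re, h2y, hmulc, hnormSq]
    have := mul_le_mul_of_nonneg_left hbre (sq_nonneg r)
    linarith
  -- power arithmetic
  have e3 : r ^ 2 * r ^ (n - 1) = r ^ (n + 1) := by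
    rw [← pow_add]; congr 1; omega
  have e4 : r ^ 2 * r ^ (n - 2) = r ^ n := by
    rw [← pow_add]; congr 1; omega
  have e5 : r ^ (n + 1) * r = r ^ (n + 2) := by rw [← pow_succ]
  have e6 : r ^ n * r ^ n = r ^ (2 * n) := by rw [← pow_add]; congr 1; omega
  have e7 : r ^ (2 * n) ≤ r ^ (n + 2) :=
    pow_le_pow_of_le_one hz0.le hr1 (by omega)
  -- AM-GM step
  obtain ⟨B, hB⟩ : ∃ B : ℝ, B = ‖b‖ * ((n : ℝ) - 1) * r ^ n := ⟨_, rfl⟩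
  have hamgm : B * |y| ≤ 2 * y ^ 2 + B ^ 2 / 8 := by
    nlinarith [sq_nonneg (B - 4 * |y|), _root_.sq_abs y]
  have hB2 : B ^ 2 ≤ ‖b‖ ^ 2 * ((n : ℝ) - 1) ^ 2 * r ^ (n + 2) := by
    have h := mul_le_mul_of_nonneg_left e7 (sq_nonneg (‖b‖ * ((n : ℝ) - 1)))
    calc B ^ 2 = (‖b‖ * ((n : ℝ) - 1)) ^ 2 * (r ^ n * r ^ n) := by rw [hB]; ring
      _ = (‖b‖ * ((n : ℝ) - 1)) ^ 2 * r ^ (2 * n) := by rw [e6]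
      _ ≤ (‖b‖ * ((n : ℝ) - 1)) ^ 2 * r ^ (n + 2) := h
      _ = ‖b‖ ^ 2 * ((n : ℝ) - 1) ^ 2 * r ^ (n + 2) := by ring
  -- final chain
  have hrK2 : K * r ≤ b.re / 2 := by
    rw [le_div_iff₀ (by linarith : (0:ℝ) < 2 * K)] at hrK
    linarith
  have hS : 0 < r ^ (n + 1) := pow_pos hz0 _
  have expand : r ^ 2 * (b.re * r ^ (n - 1) -
        ‖b‖ * (((n : ℝ) - 1) * r ^ (n - 2) * |y|)) =
      b.re * r ^ (n + 1) - B * |y| := by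
    rw [hB]
    rw [mul_sub, ← mul_assoc, mul_comm (r^2) b.re, mul_assoc b.re, e3]
    congr 1
    calc r ^ 2 * (‖b‖ * (((n : ℝ) - 1) * r ^ (n - 2) * |y|))
        = ‖b‖ * ((n : ℝ) - 1) * (r ^ 2 * r ^ (n - 2)) * |y| := by ring
      _ = ‖b‖ * ((n : ℝ) - 1) * r ^ n * |y| := by rw [e4]
  rw [expand] at hP
  have final : 0 < b.re * r ^ (n + 1) - B * |y| + 2 * y ^ 2 - C * r ^ (n + 2) := by
    have h8 : C * r ^ (n + 2) + ‖b‖ ^ 2 * ((n : ℝ) - 1) ^ 2 / 8 * r ^ (n + 2) =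
        K * r ^ (n + 2) := by rw [hK]; ring
    have h9 : K * r ^ (n + 2) ≤ (b.re / 2) * r ^ (n + 1) := by
      calc K * r ^ (n + 2) = (K * r) * r ^ (n + 1) := by rw [← e5]; ring
        _ ≤ (b.re / 2) * r ^ (n + 1) := by
            exact mul_le_mul_of_nonneg_right hrK2 hS.le
    have h10 : 0 < b.re / 2 * r ^ (n + 1) := by positivity
    linarith [hamgm, hB2, h9, h10]
  linarith

set_option maxHeartbeats 1000000 in
lemma est_neg (b : ℂ) (hb : b.re < 0) (n : ℕ) (hn : 2 ≤ n) (hodd : Odd n)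
    (C ρ : ℝ) (hC : 0 < C) (hρ : 0 < ρ) (g : ℂ → ℂ)
    (hE : ∀ z : ℂ, ‖z‖ ≤ ρ →
      ‖g z + (starRingEnd ℂ) z - z - b * z ^ n‖ ≤ C * ‖z‖ ^ (n + 1)) :
    ∃ r1 > 0, ∀ z : ℂ, 0 < ‖z‖ → ‖z‖ ≤ r1 →
      (g z * z).re < 0 := by
  obtain ⟨p, hp⟩ := hodd
  have hp1 : 1 ≤ p := by omega
  obtain ⟨K, hK⟩ : ∃ K : ℝ, K = (‖b‖) ^ 2 * ((n : ℝ) + 1) ^ 2 / 8 + C := ⟨_, rfl⟩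
  have hK0 : 0 < K := by rw [hK]; positivity
  refine ⟨min (min 1 ρ) ((-b.re) / (2 * K)),
    lt_min (lt_min one_pos hρ) (div_pos (by linarith) (by linarith)), ?_⟩
  intro z hz0 hz1
  set r := ‖z‖ with hr
  set y := z.im with hy
  have hr1 : r ≤ 1 := le_trans hz1 (le_trans (min_le_left _ _) (min_le_left _ _))
  have hrρ : r ≤ ρ := le_trans hz1 (le_trans (min_le_left _ _) (min_le_right _ _))
  have hrK : r ≤ (-b.re) / (2 * K) := le_trans hz1 (min_le_right _ _)
  have hdecomp : g z * z =
      (z - (starRingEnd ℂ) z) * z + b * z ^ (n + 1) +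
      (g z + (starRingEnd ℂ) z - z - b * z ^ n) * z := by
    rw [pow_succ]; ring
  have h2y : ((z - (starRingEnd ℂ) z) * z).re = -(2 * y ^ 2) := by
    rw [Complex.sub_conj]
    simp [Complex.mul_re, Complex.mul_im]
    ring
  -- the power bound
  have hpowb : ‖z ^ (n + 1) - ((r ^ (n + 1) : ℝ) : ℂ)‖ ≤
      ((n : ℝ) + 1) * r ^ n * |y| := by
    have hbd := abs_pow_sub_abs_pow z (p + 1) (by omega)
    have e2 : 2 * (p + 1) - 1 = n := by omega
    have e1 : 2 * (p + 1) = n + 1 := by omega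
    rw [e2, e1] at hbd
    refine le_trans hbd ?_
    have hcast : (2 : ℝ) * ((p : ℝ) + 1) = (n : ℝ) + 1 := by
      have : (n : ℝ) = 2 * (p : ℝ) + 1 := by exact_mod_cast congrArg (Nat.cast : ℕ → ℝ) hp
      linarith
    push_cast
    push_cast at hcast
    rw [← hcast]
  have hbre : (b * z ^ (n + 1)).re ≤
      b.re * r ^ (n + 1) + ‖b‖ * (((n : ℝ) + 1) * r ^ n * |y|) := by
    have hsplit : b * z ^ (n + 1) =
        b * ((r ^ (n + 1) : ℝ) : ℂ) + b * (z ^ (n + 1) - ((r ^ (n + 1) : ℝ) : ℂ)) := by ring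
    rw [hsplit, Complex.add_re]
    have h1 : (b * ((r ^ (n + 1) : ℝ) : ℂ)).re = b.re * r ^ (n + 1) := by
      simp [Complex.mul_re, Complex.ofReal_re, Complex.ofReal_im, ← Complex.ofReal_pow]
    rw [h1]
    have h2 : (b * (z ^ (n + 1) - ((r ^ (n + 1) : ℝ) : ℂ))).re ≤
        ‖b‖ * (((n : ℝ) + 1) * r ^ n * |y|) := by
      have habs2 : |(b * (z ^ (n + 1) - ((r ^ (n + 1) : ℝ) : ℂ))).re| ≤
          ‖b‖ * (((n : ℝ) + 1) * r ^ n * |y|) := by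
        refine le_trans (Complex.abs_re_le_norm _) ?_
        rw [norm_mul]
        exact mul_le_mul_of_nonneg_left hpowb (norm_nonneg b)
      linarith [(abs_le.1 habs2).2]
    linarith
  have hEre : ((g z + (starRingEnd ℂ) z - z - b * z ^ n) * z).re ≤ C * r ^ (n + 2) := by
    have habs2 : |((g z + (starRingEnd ℂ) z - z - b * z ^ n) * z).re| ≤
        C * r ^ (n + 2) := by
      refine le_trans (Complex.abs_re_le_norm _) ?_
      rw [norm_mul]
      calc ‖g z + (starRingEnd ℂ) z - z - b * z ^ n‖ * ‖z‖
          ≤ (C * r ^ (n + 1)) * r := by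
            apply mul_le_mul (hE z hrρ) le_rfl (norm_nonneg z)
            positivity
        _ = C * r ^ (n + 2) := by rw [mul_assoc, ← pow_succ]
    linarith [(abs_le.1 habs2).2]
  have hQ : (g z * z).re ≤ -(2 * y ^ 2) + (b.re * r ^ (n + 1) +
      ‖b‖ * (((n : ℝ) + 1) * r ^ n * |y|)) + C * r ^ (n + 2) := by
    rw [hdecomp, Complex.add_re, Complex.add_re, h2y]
    linarith
  -- power arithmetic
  have e5 : r ^ (n + 1) * r = r ^ (n + 2) := by rw [← pow_succ]
  have e6 : r ^ n * r ^ n = r ^ (2 * n) := by rw [← pow_add]; congr 1; omega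
  have e7 : r ^ (2 * n) ≤ r ^ (n + 2) :=
    pow_le_pow_of_le_one hz0.le hr1 (by omega)
  obtain ⟨B, hB⟩ : ∃ B : ℝ, B = ‖b‖ * ((n : ℝ) + 1) * r ^ n := ⟨_, rfl⟩
  have hamgm : B * |y| ≤ 2 * y ^ 2 + B ^ 2 / 8 := by
    nlinarith [sq_nonneg (B - 4 * |y|), _root_.sq_abs y]
  have hB2 : B ^ 2 ≤ ‖b‖ ^ 2 * ((n : ℝ) + 1) ^ 2 * r ^ (n + 2) := by
    have h := mul_le_mul_of_nonneg_left e7 (sq_nonneg (‖b‖ * ((n : ℝ) + 1)))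
    calc B ^ 2 = (‖b‖ * ((n : ℝ) + 1)) ^ 2 * (r ^ n * r ^ n) := by rw [hB]; ring
      _ = (‖b‖ * ((n : ℝ) + 1)) ^ 2 * r ^ (2 * n) := by rw [e6]
      _ ≤ (‖b‖ * ((n : ℝ) + 1)) ^ 2 * r ^ (n + 2) := h
      _ = ‖b‖ ^ 2 * ((n : ℝ) + 1) ^ 2 * r ^ (n + 2) := by ring
  have hrK2 : K * r ≤ (-b.re) / 2 := by
    rw [le_div_iff₀ (by linarith : (0:ℝ) < 2 * K)] at hrK
    nlinarith
  have hS : 0 < r ^ (n + 1) := pow_pos hz0 _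
  have hBy : ‖b‖ * (((n : ℝ) + 1) * r ^ n * |y|) = B * |y| := by rw [hB]; ring
  have final : -(2 * y ^ 2) + (b.re * r ^ (n + 1) + B * |y|) + C * r ^ (n + 2) < 0 := by
    have h8 : C * r ^ (n + 2) + ‖b‖ ^ 2 * ((n : ℝ) + 1) ^ 2 / 8 * r ^ (n + 2) =
        K * r ^ (n + 2) := by rw [hK]; ring
    have h9 : K * r ^ (n + 2) ≤ ((-b.re) / 2) * r ^ (n + 1) := by
      calc K * r ^ (n + 2) = (K * r) * r ^ (n + 1) := by rw [← e5]; ring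
        _ ≤ ((-b.re) / 2) * r ^ (n + 1) := mul_le_mul_of_nonneg_right hrK2 hS.le
    have h10 : 0 < (-b.re) / 2 * r ^ (n + 1) := by
      apply mul_pos (by linarith) hS
    linarith [hamgm, hB2, h9, h10]
  rw [hBy] at hQ
  linarith


lemma coef_bound (a : ℕ → ℂ) (f : ℂ → ℂ) (R : ℝ) (hR : 0 < R)
    (hsum : ∀ z : ℂ, ‖z‖ < R →
      HasSum (fun k : ℕ => a k * z ^ k) (f z + (starRingEnd ℂ) z)) :
    ∃ M > 0, ∀ k, ‖a k‖ * (R / 2) ^ k ≤ M := by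
  set c : ℂ := ((R / 2 : ℝ) : ℂ) with hc
  have hcabs : ‖c‖ = R / 2 := by
    rw [hc, Complex.norm_real, Real.norm_eq_abs, abs_of_pos (by linarith)]
  have hsummable := (hsum c (by rw [hcabs]; linarith)).summable
  have htend : Filter.Tendsto (fun k => ‖a k * c ^ k‖) Filter.atTop (nhds 0) := by
    simpa using hsummable.tendsto_atTop_zero.norm
  obtain ⟨M0, hM0⟩ := htend.bddAbove_range
  refine ⟨max M0 1, lt_of_lt_of_le one_pos (le_max_right _ _), ?_⟩
  intro k
  have h1 : ‖a k * c ^ k‖ ≤ M0 := hM0 (Set.mem_range_self k)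
  have h2 : ‖a k * c ^ k‖ = ‖a k‖ * (R / 2) ^ k := by
    rw [norm_mul, norm_pow, hcabs]
  rw [h2] at h1
  exact le_trans h1 (le_max_left _ _)

set_option maxHeartbeats 1000000 in
lemma tail_bound (a : ℕ → ℂ) (f : ℂ → ℂ) (R : ℝ) (hR : 0 < R)
    (ha0 : a 0 = 0) (ha1 : a 1 = 1)
    (hsum : ∀ z : ℂ, ‖z‖ < R →
      HasSum (fun k : ℕ => a k * z ^ k) (f z + (starRingEnd ℂ) z))
    (n : ℕ) (hn2 : 2 ≤ n) (hmin : ∀ m : ℕ, 2 ≤ m → m < n → a m = 0) :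
    ∃ C > 0, ∀ z : ℂ, ‖z‖ ≤ R / 4 →
      ‖f z + (starRingEnd ℂ) z - z - a n * z ^ n‖ ≤
        C * ‖z‖ ^ (n + 1) := by
  obtain ⟨M, hM0, hcoef⟩ := coef_bound a f R hR hsum
  have hfin : ∀ z : ℂ, ∑ i ∈ Finset.range (n + 1), a i * z ^ i = z + a n * z ^ n := by
    intro z
    rw [Finset.sum_range_succ]
    have h1 : ∑ i ∈ Finset.range n, a i * z ^ i = z := by
      rw [Finset.sum_eq_single_of_mem 1 (Finset.mem_range.2 (by omega))]
      · rw [ha1]; ring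
      · intro b hb hb1
        rw [Finset.mem_range] at hb
        rcases Nat.lt_or_ge b 2 with h | h
        · have hb0 : b = 0 := by omega
          rw [hb0, ha0]; ring
        · rw [hmin b h hb]; ring
    rw [h1]
  have htail : ∀ z : ℂ, ‖z‖ < R →
      HasSum (fun k => a (k + (n + 1)) * z ^ (k + (n + 1)))
        (f z + (starRingEnd ℂ) z - z - a n * z ^ n) := by
    intro z hz
    refine (hasSum_nat_add_iff (f := fun k : ℕ => a k * z ^ k) (n + 1)).2 ?_
    rw [hfin z]
    convert hsum z hz using 1
    · rfl
    ring
  refine ⟨2 * M * (2 / R) ^ (n + 1), by positivity, ?_⟩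
  intro z hz
  have hzR : ‖z‖ < R := by linarith
  obtain ⟨q, hq⟩ : ∃ q : ℝ, q = 2 * ‖z‖ / R := ⟨_, rfl⟩
  have hq0 : 0 ≤ q := by rw [hq]; positivity
  have hq2 : q ≤ 1 / 2 := by
    rw [hq, div_le_iff₀ hR]
    linarith
  have hzq : ‖z‖ = q * (R / 2) := by
    rw [hq]; field_simp
  have hbound : ∀ k : ℕ, ‖a (k + (n + 1)) * z ^ (k + (n + 1))‖ ≤
      (M * (2 / R) ^ (n + 1) * ‖z‖ ^ (n + 1)) * (1 / 2) ^ k := by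
    intro k
    rw [norm_mul, norm_pow]
    have h1 : ‖a (k + (n + 1))‖ * ‖z‖ ^ (k + (n + 1)) ≤ M * q ^ (k + (n + 1)) := by
      calc ‖a (k + (n + 1))‖ * ‖z‖ ^ (k + (n + 1))
          = (‖a (k + (n + 1))‖ * (R / 2) ^ (k + (n + 1))) * q ^ (k + (n + 1)) := by
            rw [hzq, mul_pow]; ring
        _ ≤ M * q ^ (k + (n + 1)) :=
            mul_le_mul_of_nonneg_right (hcoef _) (pow_nonneg hq0 _)
    refine le_trans h1 ?_
    have h2 : q ^ (k + (n + 1)) = q ^ (n + 1) * q ^ k := by rw [add_comm k, pow_add]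
    rw [h2]
    have h3 : q ^ (n + 1) = (2 / R) ^ (n + 1) * ‖z‖ ^ (n + 1) := by
      rw [hq, ← mul_pow]
      congr 1
      ring
    rw [h3]
    have h4 : q ^ k ≤ (1 / 2) ^ k := pow_le_pow_left₀ hq0 hq2 k
    calc M * ((2 / R) ^ (n + 1) * ‖z‖ ^ (n + 1) * q ^ k)
        ≤ M * ((2 / R) ^ (n + 1) * ‖z‖ ^ (n + 1) * (1 / 2) ^ k) := by
          apply mul_le_mul_of_nonneg_left _ hM0.le
          apply mul_le_mul_of_nonneg_left h4
          positivity
      _ = M * (2 / R) ^ (n + 1) * ‖z‖ ^ (n + 1) * (1 / 2) ^ k := by ring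
  have hgeom : HasSum (fun k : ℕ => (M * (2 / R) ^ (n + 1) * ‖z‖ ^ (n + 1)) * (1 / 2) ^ k)
      ((M * (2 / R) ^ (n + 1) * ‖z‖ ^ (n + 1)) * (1 - 1 / 2)⁻¹) :=
    (hasSum_geometric_of_lt_one (by norm_num) (by norm_num)).mul_left _
  have hnorm := tsum_of_norm_bounded hgeom hbound
  rw [(htail z hzR).tsum_eq] at hnorm
  refine le_trans hnorm (le_of_eq ?_)
  norm_num
  ring

lemma circ_cont (a : ℕ → ℂ) (f : ℂ → ℂ) (R : ℝ) (hR : 0 < R)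
    (hsum : ∀ z : ℂ, ‖z‖ < R →
      HasSum (fun k : ℕ => a k * z ^ k) (f z + (starRingEnd ℂ) z))
    (r : ℝ) (hr0 : 0 < r) (hrR : r < R / 2) :
    Continuous (fun t : ℝ => f ((r : ℂ) * Complex.exp (Complex.I * t))) := by
  obtain ⟨M, hM0, hcoef⟩ := coef_bound a f R hR hsum
  have habs : ∀ t : ℝ, ‖(r : ℂ) * Complex.exp (Complex.I * t)‖ = r :=
    abs_circle hr0
  have heq : (fun t : ℝ => f ((r : ℂ) * Complex.exp (Complex.I * t))) =
      fun t : ℝ => (∑' k : ℕ, a k * ((r : ℂ) * Complex.exp (Complex.I * t)) ^ k) -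
        (starRingEnd ℂ) ((r : ℂ) * Complex.exp (Complex.I * t)) := by
    funext t
    have h := (hsum _ (by rw [habs t]; linarith)).tsum_eq
    rw [h]; ring
  rw [heq]
  apply Continuous.sub
  · apply continuous_tsum (u := fun k => M * (2 * r / R) ^ k)
    · intro k
      continuity
    · apply Summable.mul_left
      apply summable_geometric_of_lt_one (by positivity)
      rw [div_lt_one hR]; linarith
    · intro k t
      rw [norm_mul, norm_pow, habs t]
      have h1 : ‖a k‖ * r ^ k =
          (‖a k‖ * (R / 2) ^ k) * (2 * r / R) ^ k := by
        rw [mul_assoc, ← mul_pow]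
        congr 2
        field_simp
      rw [h1]
      exact mul_le_mul_of_nonneg_right (hcoef k) (by positivity)
  · exact Complex.continuous_conj.comp (by continuity)

lemma div_re_pos (w z : ℂ) (hz : z ≠ 0) (h : 0 < (w * (starRingEnd ℂ) z).re) :
    0 < (w / z).re := by
  have hrw : w / z = (w * (starRingEnd ℂ) z) * (((Complex.normSq z)⁻¹ : ℝ) : ℂ) := by
    rw [div_eq_mul_inv, Complex.inv_def]
    ring
  rw [hrw, Complex.mul_re]
  simp only [Complex.ofReal_re, Complex.ofReal_im, mul_zero, sub_zero]
  exact mul_pos h (inv_pos.2 (Complex.normSq_pos.2 hz))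

lemma div_conj_re_neg (w z : ℂ) (hz : z ≠ 0) (h : (w * z).re < 0) :
    (w / (starRingEnd ℂ) z).re < 0 := by
  have hinv : ((starRingEnd ℂ) z)⁻¹ = z * (((Complex.normSq z)⁻¹ : ℝ) : ℂ) := by
    rw [← map_inv₀, Complex.inv_def, map_mul, Complex.conj_conj]
    congr 1
    exact Complex.conj_ofReal _
  have hrw : w / (starRingEnd ℂ) z = (w * z) * (((Complex.normSq z)⁻¹ : ℝ) : ℂ) := by
    rw [div_eq_mul_inv, hinv]
    ring
  rw [hrw, Complex.mul_re]
  simp only [Complex.ofReal_re, Complex.ofReal_im, mul_zero, sub_zero]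
  exact mul_neg_of_neg_of_pos h (inv_pos.2 (Complex.normSq_pos.2 hz))


theorem index_singular_odd_case (a : ℕ → ℂ) (f : ℂ → ℂ) (R : ℝ) (hR : 0 < R)
    (ha0 : a 0 = 0) (ha1 : a 1 = 1)
    (hsum : ∀ z : ℂ, ‖z‖ < R →
      HasSum (fun k : ℕ => a k * z ^ k) (f z + (starRingEnd ℂ) z))
    (hiso : ∀ᶠ z in nhdsWithin 0 {(0 : ℂ)}ᶜ, f z ≠ 0)
    (n : ℕ) (hn2 : 2 ≤ n) (han : a n ≠ 0)
    (hmin : ∀ m : ℕ, 2 ≤ m → m < n → a m = 0)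
    (hnodd : Odd n) :
    (0 < (a n).re → HasIndex f 0 1) ∧ ((a n).re < 0 → HasIndex f 0 (-1)) := by
  obtain ⟨C, hC, hE⟩ := tail_bound a f R hR ha0 ha1 hsum n hn2 hmin
  constructor
  · intro hre
    obtain ⟨r1, hr1, hest⟩ := est_pos (a n) hre n hn2 hnodd C (R / 4) hC (by linarith) f hE
    refine ⟨min r1 (R / 8), lt_min hr1 (by linarith), ?_⟩
    intro r hr0 hrlt
    have hrR : r < R / 2 := by
      have := lt_of_lt_of_le hrlt (min_le_right _ _)
      linarith
    apply winding_of_re_pos f r hr0 (circ_cont a f R hR hsum r hr0 hrR)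
    intro t
    set z : ℂ := (r : ℂ) * Complex.exp (Complex.I * t) with hzdef
    have hz : ‖z‖ = r := abs_circle hr0 t
    have hzne : z ≠ 0 := by
      intro h0
      rw [h0] at hz
      simp at hz
      linarith
    apply div_re_pos _ _ hzne
    apply hest
    · rw [hz]; exact hr0
    · rw [hz]
      exact le_trans hrlt.le (min_le_left _ _)
  · intro hre
    obtain ⟨r1, hr1, hest⟩ := est_neg (a n) hre n hn2 hnodd C (R / 4) hC (by linarith) f hE
    refine ⟨min r1 (R / 8), lt_min hr1 (by linarith), ?_⟩
    intro r hr0 hrlt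
    have hrR : r < R / 2 := by
      have := lt_of_lt_of_le hrlt (min_le_right _ _)
      linarith
    apply winding_of_re_neg f r hr0 (circ_cont a f R hR hsum r hr0 hrR)
    intro t
    set z : ℂ := (r : ℂ) * Complex.exp (Complex.I * t) with hzdef
    have hz : ‖z‖ = r := abs_circle hr0 t
    have hzne : z ≠ 0 := by
      intro h0
      rw [h0] at hz
      simp at hz
      linarith
    apply div_conj_re_neg _ _ hzne
    apply hest
    · rw [hz]; exact hr0
    · rw [hz]
      exact le_trans hrlt.le (min_le_left _ _)
end

section
/- Let g(z) = a z^n + z − conj(z) with a ≠ 0, n ≥ 2, and 0 < c < 1. If Re(a) ≠ 0, then for all sufficiently small ρ > 0 and all z with |z| = ρ, one has |g(z)| > c |Re(a)| ρ^n. If Re(a) = 0, then for all sufficiently small ρ > 0 and all z with |z| = ρ, one has |g(z)| > c (n/2) |a|² ρ^{2n−1}. -/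
set_option maxHeartbeats 1000000

open Complex

lemma pow_sub_pow_abs_le_s13 (ρ : ℝ) (z w : ℂ) (hz : ‖z‖ ≤ ρ) (hw : ‖w‖ ≤ ρ) :
    ∀ n : ℕ, ‖z ^ n - w ^ n‖ ≤ n * ρ ^ (n - 1) * ‖z - w‖ := by
  have hρ : 0 ≤ ρ := le_trans (norm_nonneg z) hz
  intro n
  induction n with
  | zero => simp
  | succ n ih =>
    have key : z ^ (n + 1) - w ^ (n + 1) = z * (z ^ n - w ^ n) + w ^ n * (z - w) := by ring
    rw [key]
    calc ‖z * (z ^ n - w ^ n) + w ^ n * (z - w)‖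
        ≤ ‖z * (z ^ n - w ^ n)‖ + ‖w ^ n * (z - w)‖ := norm_add_le _ _
      _ = ‖z‖ * ‖z ^ n - w ^ n‖ + ‖w‖ ^ n * ‖z - w‖ := by
          rw [norm_mul, norm_mul, norm_pow]
      _ ≤ ρ * (n * ρ ^ (n - 1) * ‖z - w‖) + ρ ^ n * ‖z - w‖ := by
          gcongr <;> first | exact norm_nonneg _ | skip
      _ ≤ (↑(n + 1) : ℝ) * ρ ^ ((n + 1) - 1) * ‖z - w‖ := by
          rcases Nat.eq_zero_or_pos n with h0 | h1
          · subst h0; simp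
          · have hpr : ρ * ρ ^ (n - 1) = ρ ^ n := by
              rw [← pow_succ']
              congr 1
              omega
            have h2 : ρ * ((n : ℝ) * ρ ^ (n - 1) * ‖z - w‖) + ρ ^ n * ‖z - w‖
                = ((n : ℝ) + 1) * ρ ^ n * ‖z - w‖ := by rw [← hpr]; ring
            simp only [Nat.add_sub_cancel]
            push_cast
            linarith [le_of_eq h2]

lemma taylor2 (ρ : ℝ) (z w : ℂ) (hz : ‖z‖ ≤ ρ) (hw : ‖w‖ ≤ ρ) :
    ∀ n : ℕ, 1 ≤ n →
    ‖z ^ n - w ^ n - n * w ^ (n - 1) * (z - w)‖ ≤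
      (n : ℝ) ^ 2 * ρ ^ (n - 2) * ‖z - w‖ ^ 2 := by
  have hρ : 0 ≤ ρ := le_trans (norm_nonneg z) hz
  intro n
  induction n with
  | zero => omega
  | succ n ih =>
    intro _
    match n, ih with
    | 0, _ =>
      have : z ^ 1 - w ^ 1 - ((1:ℕ) : ℂ) * w ^ (1 - 1) * (z - w) = 0 := by push_cast; ring
      rw [this]
      simp only [norm_zero]
      positivity
    | 1, _ =>
      have : z ^ 2 - w ^ 2 - ((2:ℕ) : ℂ) * w ^ (2 - 1) * (z - w) = (z - w) ^ 2 := by push_cast; ring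
      rw [this, norm_pow]
      norm_num
      nlinarith [sq_nonneg (‖z - w‖)]
    | (m + 2), ih =>
      have hih := ih (by omega)
      set d := ‖z - w‖ with hd
      have hd0 : 0 ≤ d := norm_nonneg _
      have key : z ^ (m + 3) - w ^ (m + 3) - ((m + 3 : ℕ) : ℂ) * w ^ ((m + 3) - 1) * (z - w)
          = z * (z ^ (m + 2) - w ^ (m + 2) - ((m + 2 : ℕ) : ℂ) * w ^ ((m + 2) - 1) * (z - w))
            + ((m + 2 : ℕ) : ℂ) * w ^ (m + 1) * (z - w) ^ 2 := by
        have e1 : (m + 3) - 1 = m + 2 := rfl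
        have e2 : (m + 2) - 1 = m + 1 := rfl
        rw [e1, e2]
        push_cast
        ring
      rw [key]
      have h2 : ‖((m + 2 : ℕ) : ℂ) * w ^ (m + 1) * (z - w) ^ 2‖
          ≤ (m + 2 : ℝ) * ρ ^ (m + 1) * d ^ 2 := by
        rw [norm_mul, norm_mul, norm_pow, norm_pow]
        simp only [Complex.norm_natCast]
        push_cast
        gcongr
      calc ‖_‖ ≤ ‖z * (z ^ (m + 2) - w ^ (m + 2) - ((m + 2 : ℕ) : ℂ) * w ^ ((m + 2) - 1) * (z - w))‖
            + ‖((m + 2 : ℕ) : ℂ) * w ^ (m + 1) * (z - w) ^ 2‖ := norm_add_le _ _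
        _ ≤ ρ * (((m + 2 : ℕ) : ℝ) ^ 2 * ρ ^ ((m + 2) - 2) * d ^ 2) + (m + 2 : ℝ) * ρ ^ (m + 1) * d ^ 2 := by
            have hstep : ‖z * (z ^ (m + 2) - w ^ (m + 2) - ((m + 2 : ℕ) : ℂ) * w ^ ((m + 2) - 1) * (z - w))‖
                ≤ ρ * (((m + 2 : ℕ) : ℝ) ^ 2 * ρ ^ ((m + 2) - 2) * d ^ 2) := by
              rw [norm_mul]
              exact mul_le_mul hz hih (norm_nonneg _) hρ
            linarith [hstep, h2]
        _ ≤ ((m + 3 : ℕ) : ℝ) ^ 2 * ρ ^ ((m + 3) - 2) * d ^ 2 := by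
            simp only [show (m + 2) - 2 = m from rfl, show (m + 3) - 2 = m + 1 from rfl]
            push_cast
            have hpm : 0 ≤ ρ ^ m := pow_nonneg hρ m
            have hrw : ρ * (((m : ℝ) + 2) ^ 2 * ρ ^ m * d ^ 2) = ((m : ℝ) + 2) ^ 2 * ρ ^ (m + 1) * d ^ 2 := by
              ring
            rw [hrw]
            have hp1 : 0 ≤ ρ ^ (m + 1) := pow_nonneg hρ _
            nlinarith [sq_nonneg d, mul_nonneg hp1 (sq_nonneg d)]


theorem lower_bound_g (a : ℂ) (ha : a ≠ 0) (n : ℕ) (hn : 2 ≤ n)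
    (c : ℝ) (hc0 : 0 < c) (hc1 : c < 1)
    (g : ℂ → ℂ) (hg : ∀ z, g z = a * z ^ n + z - (starRingEnd ℂ) z) :
    (a.re ≠ 0 → ∃ ρ0 > (0 : ℝ), ∀ ρ : ℝ, 0 < ρ → ρ < ρ0 → ∀ z : ℂ, ‖z‖ = ρ →
      c * |a.re| * ρ ^ n < ‖g z‖) ∧
    (a.re = 0 → ∃ ρ0 > (0 : ℝ), ∀ ρ : ℝ, 0 < ρ → ρ < ρ0 → ∀ z : ℂ, ‖z‖ = ρ →
      c * ((n : ℝ) / 2) * ‖a‖ ^ 2 * ρ ^ (2 * n - 1) < ‖g z‖) := by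
  obtain ⟨A, hA⟩ : ∃ q : ℝ, q = ‖a‖ := ⟨_, rfl⟩
  have hA0 : 0 < A := by rw [hA]; exact norm_pos_iff.mpr ha
  have h1c : (0:ℝ) < 1 - c := by linarith
  have hnpos : (0:ℝ) < (n:ℝ) := by positivity
  constructor
  · -- Part 1 : a.re ≠ 0
    intro hre
    obtain ⟨r, hr⟩ : ∃ q : ℝ, q = |a.re| := ⟨_, rfl⟩
    have hr0 : 0 < r := by rw [hr]; exact abs_pos.mpr hre
    have hrA : r ≤ A := by rw [hr, hA]; exact Complex.abs_re_le_norm a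
    refine ⟨min 1 (min (1 / A ^ 2) ((1 - c) * r / ((n:ℝ) * A ^ 2 * (r + 1) + 1))),
      lt_min (by norm_num) (lt_min (by positivity)
        (div_pos (mul_pos h1c hr0) (by positivity))), ?_⟩
    intro ρ hρ0 hρlt z hz
    have hρ1 : ρ < 1 := lt_of_lt_of_le hρlt (min_le_left _ _)
    have hρA2 : ρ * A ^ 2 < 1 := by
      have h := lt_of_lt_of_le hρlt (le_trans (min_le_right _ _) (min_le_left _ _))
      rw [lt_div_iff₀ (by positivity)] at h
      linarith only [h]
    have hρD : ρ * ((n:ℝ) * A ^ 2 * (r + 1) + 1) < (1 - c) * r := by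
      have h := lt_of_lt_of_le hρlt (le_trans (min_le_right _ _) (min_le_right _ _))
      rw [lt_div_iff₀ (by positivity)] at h
      exact h
    obtain ⟨x, hx⟩ : ∃ q : ℝ, q = z.re := ⟨_, rfl⟩
    obtain ⟨y, hy⟩ : ∃ q : ℝ, q = z.im := ⟨_, rfl⟩
    have hxy : x ^ 2 + y ^ 2 = ρ ^ 2 := by
      have h1 := Complex.sq_norm z
      rw [hz, Complex.normSq_apply] at h1
      rw [hx, hy]
      nlinarith only [h1]
    obtain ⟨s, hs⟩ : ∃ q : ℝ, q = ρ ^ (n - 1) := ⟨_, rfl⟩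
    obtain ⟨t, ht⟩ : ∃ q : ℝ, q = ρ ^ n := ⟨_, rfl⟩
    have hs0 : 0 < s := by rw [hs]; positivity
    have ht0 : 0 < t := by rw [ht]; positivity
    have hts : ρ * s = t := by rw [hs, ht, ← pow_succ']; congr 1; omega
    have hsρ : s ≤ ρ := by
      rw [hs]
      calc ρ ^ (n - 1) ≤ ρ ^ 1 := pow_le_pow_of_le_one hρ0.le hρ1.le (by omega)
        _ = ρ := pow_one ρ
    have hs1 : s ≤ 1 := by linarith only [hsρ, hρ1]
    have hss : s ^ 2 ≤ s := by nlinarith only [mul_nonneg hs0.le (sub_nonneg.mpr hs1)]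
    have hsρ2 : s ^ 2 ≤ ρ := le_trans hss hsρ
    have habs_azn : ‖a * z ^ n‖ = A * t := by
      rw [norm_mul, norm_pow, hz, hA, ht]
    have hgre : (g z).re = (a * z ^ n).re := by rw [hg]; simp
    have hgim : (g z).im = (a * z ^ n).im + 2 * y := by rw [hg, hy]; simp; ring
    rcases le_or_gt (|y|) (A * t) with hyb | hyb
    · -- y small : use real part
      have hxρ : |x| ≤ ρ := by
        rw [abs_le]
        constructor
        · nlinarith only [hxy, hρ0, sq_nonneg (x + ρ), sq_nonneg y]
        · nlinarith only [hxy, hρ0, sq_nonneg (x - ρ), sq_nonneg y]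
      have hzρ : ‖z‖ ≤ ρ := le_of_eq hz
      have hxCρ : ‖(x : ℂ)‖ ≤ ρ := by rw [Complex.norm_real, Real.norm_eq_abs]; exact hxρ
      have hzx : z - (x : ℂ) = (y : ℂ) * I := by
        have h := Complex.re_add_im z
        rw [hx, hy]
        linear_combination -h
      have habszx : ‖z - (x : ℂ)‖ = |y| := by
        rw [hzx, norm_mul, Complex.norm_I, Complex.norm_real, Real.norm_eq_abs, mul_one]
      have hpow1 : ‖z ^ n - ((x:ℂ)) ^ n‖ ≤ (n:ℝ) * s * |y| := by
        have h := pow_sub_pow_abs_le_s13 ρ z (x : ℂ) hzρ hxCρ n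
        rw [habszx, ← hs] at h
        exact h
      have hrexn : (a * ((x : ℂ)) ^ n).re = a.re * x ^ n := by
        simp [Complex.mul_re, ← Complex.ofReal_pow]
      have hdiff : |(a * z ^ n).re - a.re * x ^ n| ≤ A * ((n:ℝ) * s * |y|) := by
        rw [← hrexn]
        have heq : (a * z ^ n).re - (a * ((x:ℂ)) ^ n).re = (a * (z ^ n - ((x:ℂ)) ^ n)).re := by
          simp [Complex.mul_re, Complex.sub_re, Complex.sub_im]; ring
        rw [heq]
        calc |(a * (z ^ n - ((x:ℂ)) ^ n)).re| ≤ ‖a * (z ^ n - ((x:ℂ)) ^ n)‖ :=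
              Complex.abs_re_le_norm _
          _ = A * ‖z ^ n - ((x:ℂ)) ^ n‖ := by rw [norm_mul, hA]
          _ ≤ A * ((n:ℝ) * s * |y|) := by
              exact mul_le_mul_of_nonneg_left hpow1 hA0.le
      have hε1 : A ^ 2 * s ^ 2 ≤ 1 := by
        linarith only [mul_le_mul_of_nonneg_left hsρ2 (sq_nonneg A), hρA2]
      have h1ε : (0:ℝ) ≤ 1 - A ^ 2 * s ^ 2 := by linarith only [hε1]
      have hy2 : y ^ 2 ≤ ρ ^ 2 * (A ^ 2 * s ^ 2) := by
        have h : |y| ^ 2 ≤ (A * t) ^ 2 := by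
          apply sq_le_sq' <;> [linarith only [abs_nonneg y, (mul_pos hA0 ht0).le]; exact hyb]
        rw [_root_.sq_abs] at h
        have h2 : (A * t) ^ 2 = ρ ^ 2 * (A ^ 2 * s ^ 2) := by rw [← hts]; ring
        linarith only [h, h2]
      have hnn : 0 ≤ ρ * (1 - A ^ 2 * s ^ 2) := mul_nonneg hρ0.le h1ε
      have habsx : ρ * (1 - A ^ 2 * s ^ 2) ≤ |x| := by
        have hεnn : (0:ℝ) ≤ A ^ 2 * s ^ 2 := by positivity
        have hstep : (ρ * (1 - A ^ 2 * s ^ 2)) ^ 2 ≤ x ^ 2 := by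
          nlinarith only [hy2, hxy, mul_nonneg (mul_nonneg (sq_nonneg ρ) hεnn) h1ε]
        calc ρ * (1 - A ^ 2 * s ^ 2) = Real.sqrt ((ρ * (1 - A ^ 2 * s ^ 2)) ^ 2) :=
              (Real.sqrt_sq hnn).symm
          _ ≤ Real.sqrt (x ^ 2) := Real.sqrt_le_sqrt hstep
          _ = |x| := Real.sqrt_sq_eq_abs x
      have hxn : t * (1 - (n:ℝ) * (A ^ 2 * s ^ 2)) ≤ |x| ^ n := by
        have hb : 1 - (n:ℝ) * (A ^ 2 * s ^ 2) ≤ (1 - A ^ 2 * s ^ 2) ^ n := by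
          have h := one_add_mul_le_pow (a := -(A ^ 2 * s ^ 2)) (by linarith only [hε1]) n
          rw [mul_neg, ← sub_eq_add_neg, ← sub_eq_add_neg] at h; exact h
        have hp : (ρ * (1 - A ^ 2 * s ^ 2)) ^ n ≤ |x| ^ n :=
          pow_le_pow_left₀ hnn habsx n
        calc t * (1 - (n:ℝ) * (A ^ 2 * s ^ 2)) ≤ t * (1 - A ^ 2 * s ^ 2) ^ n :=
              mul_le_mul_of_nonneg_left hb ht0.le
          _ = (ρ * (1 - A ^ 2 * s ^ 2)) ^ n := by rw [mul_pow, ← ht]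
          _ ≤ |x| ^ n := hp
      have htri : r * |x| ^ n - A * ((n:ℝ) * s * |y|) ≤ |(a * z ^ n).re| := by
        have h1 : |a.re * x ^ n| = r * |x| ^ n := by rw [abs_mul, _root_.abs_pow, ← hr]
        have h2 := abs_sub_abs_le_abs_sub (a.re * x ^ n) ((a * z ^ n).re)
        rw [abs_sub_comm, h1] at h2
        linarith only [h2, hdiff]
      have hscalar : r * (n:ℝ) * A ^ 2 * s ^ 2 + (n:ℝ) * A ^ 2 * s < (1 - c) * r := by
        have m1 := mul_le_mul_of_nonneg_left hsρ2 (show (0:ℝ) ≤ r * (n:ℝ) * A ^ 2 by positivity)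
        have m2 := mul_le_mul_of_nonneg_left hsρ (show (0:ℝ) ≤ (n:ℝ) * A ^ 2 by positivity)
        linarith only [m1, m2, hρD, hρ0]
      have hcore : c * r * t < |(a * z ^ n).re| := by
        have h1 : r * (t * (1 - (n:ℝ) * (A ^ 2 * s ^ 2))) ≤ r * |x| ^ n :=
          mul_le_mul_of_nonneg_left hxn hr0.le
        have h2 : A * ((n:ℝ) * s * |y|) ≤ A * ((n:ℝ) * s * (A * t)) := by
          apply mul_le_mul_of_nonneg_left _ hA0.le
          apply mul_le_mul_of_nonneg_left hyb (by positivity)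
        have h3 := mul_lt_mul_of_pos_right hscalar ht0
        linarith only [htri, h1, h2, h3]
      calc c * |a.re| * ρ ^ n = c * r * t := by rw [← hr, ← ht]
        _ < |(a * z ^ n).re| := hcore
        _ = |(g z).re| := by rw [hgre]
        _ ≤ ‖g z‖ := Complex.abs_re_le_norm _
    · -- y large : use imaginary part
      have him : |(a * z ^ n).im| ≤ A * t := by
        rw [← habs_azn]; exact Complex.abs_im_le_norm _
      have h2y : |2 * y| ≤ |(g z).im| + |(a * z ^ n).im| := by
        have heq : (2 : ℝ) * y = (g z).im - (a * z ^ n).im := by rw [hgim]; ring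
        rw [heq]
        exact abs_sub _ _
      have hgim_lb : A * t < |(g z).im| := by
        rw [abs_mul] at h2y
        simp only [_root_.abs_two] at h2y
        linarith only [h2y, him, hyb]
      calc c * |a.re| * ρ ^ n = c * r * t := by rw [← hr, ← ht]
        _ < A * t := mul_lt_mul_of_pos_right
              (by linarith only [mul_pos hr0 h1c, hrA] : c * r < A) ht0
        _ < |(g z).im| := hgim_lb
        _ ≤ ‖g z‖ := Complex.abs_im_le_norm _
  · -- Part 2 : a.re = 0
    intro hre
    have haim : a.im ≠ 0 := by
      intro h
      exact ha (Complex.ext hre h)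
    have hAim : A = |a.im| := by
      rw [hA, Complex.norm_def, Complex.normSq_apply, hre]
      simp [Real.sqrt_mul_self_eq_abs]
    refine ⟨min 1 (min (1 / A ^ 2) (min (1 / ((n:ℝ) * A))
        ((1 - c) * (n:ℝ) * A ^ 2 / ((2*(n:ℝ)^2*A^4 + (n:ℝ)^2*A^3 + (n:ℝ)^3*A^4 + 2*(n:ℝ)^2*A^3) + 1)))),
      lt_min (by norm_num) (lt_min (by positivity) (lt_min (by positivity)
        (div_pos (mul_pos (mul_pos h1c hnpos) (by positivity)) (by positivity)))), ?_⟩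
    intro ρ hρ0 hρlt z hz
    have hρ1 : ρ < 1 := lt_of_lt_of_le hρlt (min_le_left _ _)
    have hρA2 : ρ * A ^ 2 < 1 := by
      have h := lt_of_lt_of_le hρlt (le_trans (min_le_right _ _) (min_le_left _ _))
      rw [lt_div_iff₀ (by positivity)] at h
      linarith only [h]
    have hρnA : ρ * ((n:ℝ) * A) < 1 := by
      have h := lt_of_lt_of_le hρlt (le_trans (min_le_right _ _)
        (le_trans (min_le_right _ _) (min_le_left _ _)))
      rw [lt_div_iff₀ (by positivity)] at h
      linarith only [h]
    have hρC3 : ρ * ((2*(n:ℝ)^2*A^4 + (n:ℝ)^2*A^3 + (n:ℝ)^3*A^4 + 2*(n:ℝ)^2*A^3) + 1)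
        < (1 - c) * (n:ℝ) * A ^ 2 := by
      have h := lt_of_lt_of_le hρlt (le_trans (min_le_right _ _)
        (le_trans (min_le_right _ _) (min_le_right _ _)))
      rw [lt_div_iff₀ (by positivity)] at h
      linarith only [h]
    obtain ⟨x, hx⟩ : ∃ q : ℝ, q = z.re := ⟨_, rfl⟩
    obtain ⟨y, hy⟩ : ∃ q : ℝ, q = z.im := ⟨_, rfl⟩
    have hxy : x ^ 2 + y ^ 2 = ρ ^ 2 := by
      have h1 := Complex.sq_norm z
      rw [hz, Complex.normSq_apply] at h1
      rw [hx, hy]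
      nlinarith only [h1]
    obtain ⟨s, hs⟩ : ∃ q : ℝ, q = ρ ^ (n - 1) := ⟨_, rfl⟩
    obtain ⟨t, ht⟩ : ∃ q : ℝ, q = ρ ^ n := ⟨_, rfl⟩
    have hs0 : 0 < s := by rw [hs]; positivity
    have ht0 : 0 < t := by rw [ht]; positivity
    have hts : ρ * s = t := by rw [hs, ht, ← pow_succ']; congr 1; omega
    have huts : t * s = ρ ^ (2 * n - 1) := by rw [hs, ht, ← pow_add]; congr 1; omega
    have hsρ : s ≤ ρ := by
      rw [hs]
      calc ρ ^ (n - 1) ≤ ρ ^ 1 := pow_le_pow_of_le_one hρ0.le hρ1.le (by omega)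
        _ = ρ := pow_one ρ
    have hs1 : s ≤ 1 := by linarith only [hsρ, hρ1]
    have hss : s ^ 2 ≤ s := by nlinarith only [mul_nonneg hs0.le (sub_nonneg.mpr hs1)]
    have hsρ2 : s ^ 2 ≤ ρ := le_trans hss hsρ
    have habs_zn : ‖z ^ n‖ = t := by rw [norm_pow, hz, ht]
    have hgre2 : (g z).re = -(a.im * (z ^ n).im) := by
      rw [hg]; simp [Complex.mul_re, hre]
    have hgim2 : (g z).im = a.im * (z ^ n).re + 2 * y := by
      rw [hg, hy]; simp [Complex.mul_im, hre]; ring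
    -- rewrite the goal
    rw [← hA, ← huts]
    rcases le_or_gt (|(g z).im|) (c * ((n : ℝ) / 2) * A ^ 2 * (t * s)) with hIm | hIm
    · -- small imaginary part of g : use real part
      have hκ : ((2 * n - 1 : ℕ) : ℝ) = 2 * (n:ℝ) - 1 := by
        have h1 : (1:ℕ) ≤ 2 * n := by omega
        push_cast [Nat.cast_sub h1]
        ring
      have hκ2n : ((2 * n - 1 : ℕ) : ℝ) ≤ 2 * (n:ℝ) := by rw [hκ]; linarith
      have hκ0 : (0:ℝ) ≤ ((2 * n - 1 : ℕ) : ℝ) := by positivity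
      have hrezn : |(z ^ n).re| ≤ t := le_trans (Complex.abs_re_le_norm _) (le_of_eq habs_zn)
      have hMt : c * ((n : ℝ) / 2) * A ^ 2 * (t * s) ≤ A * t := by
        have h1 : c * ((n:ℝ) / 2) * A * s ≤ 1 := by
          have h2 : c * s ≤ 1 * ρ := mul_le_mul hc1.le hsρ hs0.le zero_le_one
          linarith only [mul_le_mul_of_nonneg_left h2 (show (0:ℝ) ≤ (n:ℝ) * A by positivity), hρnA, hc0.le]
        calc c * ((n : ℝ) / 2) * A ^ 2 * (t * s) = (c * ((n:ℝ)/2) * A * s) * (A * t) := by ring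
          _ ≤ 1 * (A * t) := mul_le_mul_of_nonneg_right h1 (by positivity)
          _ = A * t := one_mul _
      have hyb : |y| ≤ A * t := by
        have h2y : |2 * y| ≤ |(g z).im| + |a.im * (z ^ n).re| := by
          have heq : (2:ℝ) * y = (g z).im - a.im * (z ^ n).re := by rw [hgim2]; ring
          rw [heq]; exact abs_sub _ _
        have h3 : |a.im * (z ^ n).re| ≤ A * t := by
          rw [abs_mul, ← hAim]
          exact mul_le_mul_of_nonneg_left hrezn hA0.le
        have h4 : |2 * y| = 2 * |y| := by rw [abs_mul, _root_.abs_two]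
        linarith only [hIm, hMt, h2y, h3, h4]
      -- geometry of z
      have hxρ : |x| ≤ ρ := by
        rw [abs_le]
        constructor
        · nlinarith only [hxy, hρ0, sq_nonneg (x + ρ), sq_nonneg y]
        · nlinarith only [hxy, hρ0, sq_nonneg (x - ρ), sq_nonneg y]
      have hzρ : ‖z‖ ≤ ρ := le_of_eq hz
      have hxCρ : ‖(x : ℂ)‖ ≤ ρ := by rw [Complex.norm_real, Real.norm_eq_abs]; exact hxρ
      have hzx : z - (x : ℂ) = (y : ℂ) * I := by
        have h := Complex.re_add_im z
        rw [hx, hy]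
        linear_combination -h
      have habszx : ‖z - (x : ℂ)‖ = |y| := by
        rw [hzx, norm_mul, Complex.norm_I, Complex.norm_real, Real.norm_eq_abs, mul_one]
      -- second order Taylor bound
      have hf := taylor2 ρ z ((x : ℂ)) hzρ hxCρ n (by omega)
      rw [habszx, _root_.sq_abs] at hf
      have hFeq : z ^ n - ((x:ℂ)) ^ n - (n : ℂ) * ((x:ℂ)) ^ (n - 1) * (z - (x:ℂ))
          = z ^ n - (((x ^ n : ℝ)) : ℂ) - ((((n:ℝ) * x ^ (n-1) * y : ℝ)) : ℂ) * I := by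
        rw [hzx]; push_cast; ring
      rw [hFeq] at hf
      have hFre : (z ^ n - (((x ^ n : ℝ)) : ℂ) - ((((n:ℝ) * x ^ (n-1) * y : ℝ)) : ℂ) * I).re
          = (z ^ n).re - x ^ n := by
        simp only [Complex.sub_re, Complex.sub_im, Complex.ofReal_re, Complex.ofReal_im,
          Complex.mul_re, Complex.mul_im, Complex.I_re, Complex.I_im]
        ring
      have hFim : (z ^ n - (((x ^ n : ℝ)) : ℂ) - ((((n:ℝ) * x ^ (n-1) * y : ℝ)) : ℂ) * I).im
          = (z ^ n).im - (n:ℝ) * x ^ (n-1) * y := by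
        simp only [Complex.sub_re, Complex.sub_im, Complex.ofReal_re, Complex.ofReal_im,
          Complex.mul_re, Complex.mul_im, Complex.I_re, Complex.I_im]
        ring
      have he2 : |(z ^ n).re - x ^ n| ≤ (n:ℝ) ^ 2 * ρ ^ (n - 2) * y ^ 2 := by
        rw [← hFre]; exact le_trans (Complex.abs_re_le_norm _) hf
      have he1 : |(z ^ n).im - (n:ℝ) * x ^ (n-1) * y| ≤ (n:ℝ) ^ 2 * ρ ^ (n - 2) * y ^ 2 := by
        rw [← hFim]; exact le_trans (Complex.abs_im_le_norm _) hf
      have hy2' : y ^ 2 ≤ A ^ 2 * (t * t) := by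
        have h : |y| ^ 2 ≤ (A * t) ^ 2 := by
          apply sq_le_sq' <;> [linarith only [abs_nonneg y, (mul_pos hA0 ht0).le]; exact hyb]
        rw [_root_.sq_abs] at h
        have h2 : (A * t) ^ 2 = A ^ 2 * (t * t) := by ring
        linarith only [h, h2]
      have hqt : ρ ^ (n - 2) * (t * t) = t * s ^ 2 := by
        rw [ht, hs, ← pow_mul, ← pow_add, ← pow_add, ← pow_add]
        congr 1
        omega
      have hE2 : |(z ^ n).re - x ^ n| ≤ (n:ℝ) ^ 2 * A ^ 2 * (t * s ^ 2) := by
        have h1 : (n:ℝ) ^ 2 * ρ ^ (n - 2) * y ^ 2 ≤ (n:ℝ) ^ 2 * ρ ^ (n - 2) * (A ^ 2 * (t * t)) := by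
          apply mul_le_mul_of_nonneg_left hy2' (by positivity)
        have h2 : (n:ℝ) ^ 2 * ρ ^ (n - 2) * (A ^ 2 * (t * t)) = (n:ℝ) ^ 2 * A ^ 2 * (t * s ^ 2) := by
          rw [← hqt]; ring
        linarith only [he2, h1, h2]
      have hE1 : |(z ^ n).im - (n:ℝ) * x ^ (n-1) * y| ≤ (n:ℝ) ^ 2 * A ^ 2 * (t * s ^ 2) := by
        have h1 : (n:ℝ) ^ 2 * ρ ^ (n - 2) * y ^ 2 ≤ (n:ℝ) ^ 2 * ρ ^ (n - 2) * (A ^ 2 * (t * t)) := by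
          apply mul_le_mul_of_nonneg_left hy2' (by positivity)
        have h2 : (n:ℝ) ^ 2 * ρ ^ (n - 2) * (A ^ 2 * (t * t)) = (n:ℝ) ^ 2 * A ^ 2 * (t * s ^ 2) := by
          rw [← hqt]; ring
        linarith only [he1, h1, h2]
      -- key algebraic identity
      have hxx : x ^ (n - 1) * x ^ n = x ^ (2 * n - 1) := by
        rw [← pow_add]; congr 1; omega
      have hkey : 2 * (z ^ n).im + a.im * (n:ℝ) * x ^ (2 * n - 1)
          = (n:ℝ) * x ^ (n-1) * ((g z).im - a.im * ((z ^ n).re - x ^ n))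
            + 2 * ((z ^ n).im - (n:ℝ) * x ^ (n-1) * y) := by
        rw [hgim2, ← hxx]; ring
      have hb2 : |x ^ (n - 1)| ≤ s := by
        rw [_root_.abs_pow, hs]
        exact pow_le_pow_left₀ (abs_nonneg x) hxρ _
      have hW : |(g z).im - a.im * ((z ^ n).re - x ^ n)|
          ≤ c * ((n : ℝ) / 2) * A ^ 2 * (t * s) + A * ((n:ℝ) ^ 2 * A ^ 2 * (t * s ^ 2)) := by
        have p1 : |(g z).im - a.im * ((z ^ n).re - x ^ n)|
            ≤ |(g z).im| + |a.im * ((z ^ n).re - x ^ n)| := abs_sub _ _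
        have p2 : |a.im * ((z ^ n).re - x ^ n)| = A * |(z ^ n).re - x ^ n| := by
          rw [abs_mul, ← hAim]
        have p3 := mul_le_mul_of_nonneg_left hE2 hA0.le
        linarith only [hIm, p1, p2, p3]
      have hS : |(n:ℝ) * x ^ (n-1) * ((g z).im - a.im * ((z ^ n).re - x ^ n))
            + 2 * ((z ^ n).im - (n:ℝ) * x ^ (n-1) * y)|
          ≤ (n:ℝ) * s * (c * ((n : ℝ) / 2) * A ^ 2 * (t * s) + A * ((n:ℝ) ^ 2 * A ^ 2 * (t * s ^ 2)))
            + 2 * ((n:ℝ) ^ 2 * A ^ 2 * (t * s ^ 2)) := by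
        have p1 : |(n:ℝ) * x ^ (n-1) * ((g z).im - a.im * ((z ^ n).re - x ^ n))|
            ≤ (n:ℝ) * s * (c * ((n : ℝ) / 2) * A ^ 2 * (t * s) + A * ((n:ℝ) ^ 2 * A ^ 2 * (t * s ^ 2))) := by
          rw [abs_mul, abs_mul, Nat.abs_cast]
          exact mul_le_mul (mul_le_mul_of_nonneg_left hb2 hnpos.le) hW (abs_nonneg _) (by positivity)
        have p2 : |2 * ((z ^ n).im - (n:ℝ) * x ^ (n-1) * y)| ≤ 2 * ((n:ℝ) ^ 2 * A ^ 2 * (t * s ^ 2)) := by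
          rw [abs_mul, _root_.abs_two]
          linarith only [hE1]
        calc _ ≤ |(n:ℝ) * x ^ (n-1) * ((g z).im - a.im * ((z ^ n).re - x ^ n))|
              + |2 * ((z ^ n).im - (n:ℝ) * x ^ (n-1) * y)| := abs_add_le _ _
          _ ≤ _ := add_le_add p1 p2
      -- lower bound for |x|^(2n-1)
      have hε1 : A ^ 2 * s ^ 2 ≤ 1 := by
        linarith only [mul_le_mul_of_nonneg_left hsρ2 (sq_nonneg A), hρA2]
      have h1ε : (0:ℝ) ≤ 1 - A ^ 2 * s ^ 2 := by linarith only [hε1]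
      have hy2 : y ^ 2 ≤ ρ ^ 2 * (A ^ 2 * s ^ 2) := by
        have h2 : A ^ 2 * (t * t) = ρ ^ 2 * (A ^ 2 * s ^ 2) := by
          rw [← hts]; ring
        linarith only [hy2', h2]
      have hnn : 0 ≤ ρ * (1 - A ^ 2 * s ^ 2) := mul_nonneg hρ0.le h1ε
      have habsx : ρ * (1 - A ^ 2 * s ^ 2) ≤ |x| := by
        have hεnn : (0:ℝ) ≤ A ^ 2 * s ^ 2 := by positivity
        have hstep : (ρ * (1 - A ^ 2 * s ^ 2)) ^ 2 ≤ x ^ 2 := by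
          nlinarith only [hy2, hxy, mul_nonneg (mul_nonneg (sq_nonneg ρ) hεnn) h1ε]
        calc ρ * (1 - A ^ 2 * s ^ 2) = Real.sqrt ((ρ * (1 - A ^ 2 * s ^ 2)) ^ 2) :=
              (Real.sqrt_sq hnn).symm
          _ ≤ Real.sqrt (x ^ 2) := Real.sqrt_le_sqrt hstep
          _ = |x| := Real.sqrt_sq_eq_abs x
      have hx2n : (t * s) * (1 - ((2 * n - 1 : ℕ) : ℝ) * (A ^ 2 * s ^ 2)) ≤ |x| ^ (2 * n - 1) := by
        have hb : 1 - ((2 * n - 1 : ℕ) : ℝ) * (A ^ 2 * s ^ 2) ≤ (1 - A ^ 2 * s ^ 2) ^ (2 * n - 1) := by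
          have h := one_add_mul_le_pow (a := -(A ^ 2 * s ^ 2)) (by linarith only [hε1]) (2 * n - 1)
          rw [mul_neg, ← sub_eq_add_neg, ← sub_eq_add_neg] at h; exact h
        have hp : (ρ * (1 - A ^ 2 * s ^ 2)) ^ (2 * n - 1) ≤ |x| ^ (2 * n - 1) :=
          pow_le_pow_left₀ hnn habsx _
        have hts0 : 0 < t * s := mul_pos ht0 hs0
        calc (t * s) * (1 - ((2 * n - 1 : ℕ) : ℝ) * (A ^ 2 * s ^ 2))
            ≤ (t * s) * (1 - A ^ 2 * s ^ 2) ^ (2 * n - 1) := mul_le_mul_of_nonneg_left hb hts0.le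
          _ = (ρ * (1 - A ^ 2 * s ^ 2)) ^ (2 * n - 1) := by rw [mul_pow, huts]
          _ ≤ |x| ^ (2 * n - 1) := hp
      have hB : |a.im * (n:ℝ) * x ^ (2 * n - 1)| = A * (n:ℝ) * |x| ^ (2 * n - 1) := by
        rw [abs_mul, abs_mul, Nat.abs_cast, _root_.abs_pow, ← hAim]
      -- the main lower bound on 2|Im(z^n)|
      have hlow : A * (n:ℝ) * ((t * s) * (1 - ((2 * n - 1 : ℕ) : ℝ) * (A ^ 2 * s ^ 2)))
          - ((n:ℝ) * s * (c * ((n : ℝ) / 2) * A ^ 2 * (t * s) + A * ((n:ℝ) ^ 2 * A ^ 2 * (t * s ^ 2)))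
            + 2 * ((n:ℝ) ^ 2 * A ^ 2 * (t * s ^ 2)))
          ≤ 2 * |(z ^ n).im| := by
        have h4 := abs_sub_abs_le_abs_sub (a.im * (n:ℝ) * x ^ (2 * n - 1))
          (2 * (z ^ n).im + a.im * (n:ℝ) * x ^ (2 * n - 1))
        have h5 : a.im * (n:ℝ) * x ^ (2 * n - 1)
            - (2 * (z ^ n).im + a.im * (n:ℝ) * x ^ (2 * n - 1)) = -(2 * (z ^ n).im) := by ring
        rw [h5, abs_neg] at h4
        have h6 : |2 * (z ^ n).im| = 2 * |(z ^ n).im| := by rw [abs_mul, _root_.abs_two]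
        have h7 : |2 * (z ^ n).im + a.im * (n:ℝ) * x ^ (2 * n - 1)|
            ≤ (n:ℝ) * s * (c * ((n : ℝ) / 2) * A ^ 2 * (t * s) + A * ((n:ℝ) ^ 2 * A ^ 2 * (t * s ^ 2)))
              + 2 * ((n:ℝ) ^ 2 * A ^ 2 * (t * s ^ 2)) := by
          rw [hkey]; exact hS
        have h8 : A * (n:ℝ) * ((t * s) * (1 - ((2 * n - 1 : ℕ) : ℝ) * (A ^ 2 * s ^ 2)))
            ≤ |a.im * (n:ℝ) * x ^ (2 * n - 1)| := by
          rw [hB]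
          calc A * (n:ℝ) * ((t * s) * (1 - ((2 * n - 1 : ℕ) : ℝ) * (A ^ 2 * s ^ 2)))
              ≤ A * (n:ℝ) * (|x| ^ (2 * n - 1)) := mul_le_mul_of_nonneg_left hx2n (by positivity)
            _ = A * (n:ℝ) * |x| ^ (2 * n - 1) := by ring
        linarith only [h4, h6, h7, h8]
      -- scalar smallness inequality
      have hsc : c * (n:ℝ) * A ^ 2 + ((2 * n - 1 : ℕ) : ℝ) * (n:ℝ) * A ^ 4 * s ^ 2
          + c * (n:ℝ) ^ 2 / 2 * A ^ 3 * s + (n:ℝ) ^ 3 * A ^ 4 * s ^ 2 + 2 * (n:ℝ) ^ 2 * A ^ 3 * s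
          < (n:ℝ) * A ^ 2 := by
        have k1 := mul_le_mul_of_nonneg_left
          (mul_le_mul hκ2n hsρ2 (sq_nonneg s) (by positivity))
          (show (0:ℝ) ≤ (n:ℝ) * A ^ 4 by positivity)
        have k2' : c * s ≤ 1 * ρ := mul_le_mul hc1.le hsρ hs0.le zero_le_one
        have k2 := mul_le_mul_of_nonneg_left k2' (show (0:ℝ) ≤ (n:ℝ) ^ 2 * A ^ 3 / 2 by positivity)
        have k3 := mul_le_mul_of_nonneg_left hsρ2 (show (0:ℝ) ≤ (n:ℝ) ^ 3 * A ^ 4 by positivity)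
        have k4 := mul_le_mul_of_nonneg_left hsρ (show (0:ℝ) ≤ 2 * (n:ℝ) ^ 2 * A ^ 3 by positivity)
        have hpos : (0:ℝ) ≤ (n:ℝ) ^ 2 * A ^ 3 * ρ := by positivity
        linarith only [k1, k2, k3, k4, hρC3, hρ0, hpos]
      -- conclude
      refine lt_of_lt_of_le ?_ (Complex.abs_re_le_norm (g z))
      have hre_abs : |(g z).re| = A * |(z ^ n).im| := by
        rw [hgre2, abs_neg, abs_mul, ← hAim]
      rw [hre_abs]
      have hfin1 := mul_le_mul_of_nonneg_left hlow hA0.le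
      have hfin2 := mul_lt_mul_of_pos_right hsc (mul_pos ht0 hs0)
      linarith only [hfin1, hfin2]
    · -- large imaginary part of g
      calc c * ((n : ℝ) / 2) * A ^ 2 * (t * s) < |(g z).im| := hIm
        _ ≤ ‖g z‖ := Complex.abs_im_le_norm _
end

section
/- Let n ≥ 2 and let a, b ∈ ℂ be nonzero with the same argument (i.e., b = t·a for some t > 0). Then g(z) = a z^n + z − conj(z) and g̃(z) = b z^n + z − conj(z) have the same Poincaré index at the origin. -/
open Complex Set

theorem index_same_ray (n : ℕ) (hn : 2 ≤ n) (a b : ℂ) (ha : a ≠ 0) (hb : b ≠ 0)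
    (hray : ∃ t : ℝ, 0 < t ∧ b = (t : ℂ) * a)
    (g gt : ℂ → ℂ)
    (hg : ∀ z, g z = a * z ^ n + z - (starRingEnd ℂ) z)
    (hgt : ∀ z, gt z = b * z ^ n + z - (starRingEnd ℂ) z) :
    ∀ m : ℤ, HasIndex g 0 m ↔ HasIndex gt 0 m := by
  obtain ⟨t, ht, rfl⟩ := hray
  obtain ⟨k, rfl⟩ : ∃ k, n = k + 2 := ⟨n - 2, by omega⟩
  set s : ℝ := t ^ ((k + 1 : ℝ)⁻¹) with hs
  have hs0 : 0 < s := Real.rpow_pos_of_pos ht _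
  have hsC : (s : ℂ) ≠ 0 := by exact_mod_cast hs0.ne'
  have hsk : s ^ (k + 1) = t := by
    rw [hs, ← Real.rpow_natCast _ (k + 1), ← Real.rpow_mul ht.le]
    have h1 : ((k : ℝ) + 1)⁻¹ * ((k + 1 : ℕ) : ℝ) = 1 := by
      push_cast; rw [inv_mul_cancel₀ (by positivity)]
    rw [h1, Real.rpow_one]
  have hbt : (t : ℂ) = (s : ℂ) ^ (k + 1) := by
    rw [← hsk]; push_cast; ring
  -- key scaling identity
  have key : ∀ z : ℂ, gt z = (s : ℂ)⁻¹ * g ((s : ℂ) * z) := by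
    intro z
    rw [hgt, hg, hbt, map_mul, Complex.conj_ofReal]
    field_simp
    ring
  -- winding transfer
  have wind : ∀ (r : ℝ) (m : ℤ), WindingOn gt 0 r m ↔ WindingOn g 0 (s * r) m := by
    intro r m
    have hpt : ∀ τ θτ : ℝ,
        (gt (0 + ↑r * Complex.exp (Complex.I * τ)) =
          (‖gt (0 + ↑r * Complex.exp (Complex.I * τ))‖ : ℂ) *
            Complex.exp (Complex.I * (θτ : ℝ))) ↔
        (g (0 + ↑(s * r) * Complex.exp (Complex.I * τ)) =
          (‖g (0 + ↑(s * r) * Complex.exp (Complex.I * τ))‖ : ℂ) *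
            Complex.exp (Complex.I * (θτ : ℝ))) := by
      intro τ θτ
      have hz : (0 : ℂ) + ((s * r : ℝ) : ℂ) * Complex.exp (Complex.I * τ) =
          (s : ℂ) * ((0 : ℂ) + (r : ℝ) * Complex.exp (Complex.I * τ)) := by
        push_cast; ring
      rw [hz, key]
      set w := g ((s : ℂ) * ((0 : ℂ) + (r : ℝ) * Complex.exp (Complex.I * τ))) with hw
      have habs : ‖(s : ℂ)⁻¹ * w‖ = s⁻¹ * ‖w‖ := by
        rw [norm_mul, norm_inv, Complex.norm_of_nonneg hs0.le]
      rw [habs]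
      push_cast
      rw [mul_assoc]
      exact mul_right_inj' (inv_ne_zero hsC)
    constructor
    · rintro ⟨θ, hc, hθ, hd⟩
      exact ⟨θ, hc, fun τ hτ => (hpt τ (θ τ)).1 (hθ τ hτ), hd⟩
    · rintro ⟨θ, hc, hθ, hd⟩
      exact ⟨θ, hc, fun τ hτ => (hpt τ (θ τ)).2 (hθ τ hτ), hd⟩
  intro m
  constructor
  · rintro ⟨r0, hr0, H⟩
    refine ⟨r0 / s, by positivity, fun r hr hrlt => ?_⟩
    rw [wind r m]
    exact H (s * r) (by positivity) (by rw [lt_div_iff₀ hs0] at hrlt; linarith [mul_comm s r])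
  · rintro ⟨r0, hr0, H⟩
    refine ⟨r0 * s, by positivity, fun r hr hrlt => ?_⟩
    have : r = s * (r / s) := by field_simp
    rw [this]
    rw [← wind (r / s) m]
    exact H (r / s) (by positivity) (by rw [div_lt_iff₀ hs0]; linarith [mul_comm r0 s])
end
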